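/- arXiv:1608.08391 — 8 statements merged into one kernel-verified Lean document; each statement's English description precedes it below -/
import Mathlib

section
/- Let n ≥ 1 and 1 ≤ α, β ≤ n. Let p, q ∈ ℂⁿ be linearly independent and define P, Q : ℂ^{n×n} → ℂ by P(z) = Σ_j p_j z_{jα} and Q(z) = Σ_k q_k z_{kβ}. Let f = P/Q on the open subset W_Q = {z ∈ U(n) : Q(z) ≠ 0} of U(n). Then f is harmonic on W_Q (i.e. τ(f) vanishes identically on W_Q) if and only if α = β. -/
open Matrix

noncomputable section

/-- The matrix unit `E_{rs}` in `ℂ^{n×n}`. -/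
def matE (n : ℕ) (r s : Fin n) : Matrix (Fin n) (Fin n) ℂ :=
  Matrix.single r s 1

/-- `Y_{rs} = (E_{rs} − E_{sr})/√2`. -/
def matY (n : ℕ) (r s : Fin n) : Matrix (Fin n) (Fin n) ℂ :=
  ((Real.sqrt 2 : ℂ))⁻¹ • (matE n r s - matE n s r)

/-- `X_{rs} = (E_{rs} + E_{sr})/√2`. -/
def matX (n : ℕ) (r s : Fin n) : Matrix (Fin n) (Fin n) ℂ :=
  ((Real.sqrt 2 : ℂ))⁻¹ • (matE n r s + matE n s r)

/-- `Z(f)(p) = (d/ds)|₀ f(p·exp(sZ))`: derivative of `f` at `p` along the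
left-invariant vector field determined by `Z`. -/
def lieD1 {n : ℕ} (f : Matrix (Fin n) (Fin n) ℂ → ℂ)
    (p Z : Matrix (Fin n) (Fin n) ℂ) : ℂ :=
  deriv (fun s : ℝ => f (p * NormedSpace.exp ((s : ℂ) • Z))) 0

/-- `Z²(f)(p) = (d²/ds²)|₀ f(p·exp(sZ))`. -/
def lieD2 {n : ℕ} (f : Matrix (Fin n) (Fin n) ℂ → ℂ)
    (p Z : Matrix (Fin n) (Fin n) ℂ) : ℂ :=
  deriv (deriv (fun s : ℝ => f (p * NormedSpace.exp ((s : ℂ) • Z)))) 0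

/-- The Laplace–Beltrami operator (tension field) on `U(n)`:
`τ(f)(p) = Σ_{Z ∈ B} Z²(f)(p)` for the standard orthonormal basis
`B = {Y_{rs}, iX_{rs} : r < s} ∪ {iE_{tt}}` of `u(n)`. -/
def tauU (n : ℕ) (f : Matrix (Fin n) (Fin n) ℂ → ℂ)
    (p : Matrix (Fin n) (Fin n) ℂ) : ℂ :=
  (∑ r : Fin n, ∑ s : Fin n, if r < s then
      lieD2 f p (matY n r s) + lieD2 f p (Complex.I • matX n r s) else 0)
  + ∑ t : Fin n, lieD2 f p (Complex.I • matE n t t)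

/-- The conformality operator on `U(n)`:
`κ(f,h)(p) = Σ_{Z ∈ B} Z(f)(p)·Z(h)(p)`. -/
def kappaU (n : ℕ) (f h : Matrix (Fin n) (Fin n) ℂ → ℂ)
    (p : Matrix (Fin n) (Fin n) ℂ) : ℂ :=
  (∑ r : Fin n, ∑ s : Fin n, if r < s then
      lieD1 f p (matY n r s) * lieD1 h p (matY n r s)
        + lieD1 f p (Complex.I • matX n r s) * lieD1 h p (Complex.I • matX n r s) else 0)
  + ∑ t : Fin n, lieD1 f p (Complex.I • matE n t t) * lieD1 h p (Complex.I • matE n t t)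

/-! ### Auxiliary material -/

section Aux

variable {n : ℕ}

/-- the scalar `(√2)⁻¹`. -/
private lemma sqrt2_inv_sq : ((Real.sqrt 2 : ℂ))⁻¹ * ((Real.sqrt 2 : ℂ))⁻¹ = 2⁻¹ := by
  rw [← mul_inv]
  norm_cast
  rw [Real.mul_self_sqrt (by norm_num)]
  norm_num

/-- linear functional `w ↦ ∑ C j m * (z*w) j m` on matrices. -/
def FLmap (z C : Matrix (Fin n) (Fin n) ℂ) : Matrix (Fin n) (Fin n) ℂ →ₗ[ℂ] ℂ where
  toFun w := ∑ j, ∑ m, C j m * (z * w) j m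
  map_add' x y := by simp [Matrix.mul_add, mul_add, Finset.sum_add_distrib]
  map_smul' c x := by
    simp [Matrix.mul_smul, Finset.mul_sum, smul_eq_mul]
    congr 1; ext j; congr 1; ext m; ring

def Ffun (z Z C : Matrix (Fin n) (Fin n) ℂ) (s : ℝ) : ℂ :=
  ∑ j, ∑ m, C j m * (z * NormedSpace.exp ((s : ℂ) • Z)) j m

lemma Ffun_shift' (Z C : Matrix (Fin n) (Fin n) ℂ) (u : Matrix (Fin n) (Fin n) ℂ) :
    ∑ j, ∑ m, C j m * (u * Z) j m = ∑ j, ∑ m, (C * Zᵀ) j m * u j m := by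
  refine Finset.sum_congr rfl fun j _ => ?_
  simp only [Matrix.mul_apply, Matrix.transpose_apply, Finset.mul_sum, Finset.sum_mul]
  rw [Finset.sum_comm]
  exact Finset.sum_congr rfl fun l _ => Finset.sum_congr rfl fun m _ => by ring

lemma Ffun_shift (z Z C : Matrix (Fin n) (Fin n) ℂ) (w : Matrix (Fin n) (Fin n) ℂ) :
    ∑ j, ∑ m, C j m * (z * (w * Z)) j m = ∑ j, ∑ m, (C * Zᵀ) j m * (z * w) j m := by
  rw [← mul_assoc, Ffun_shift']

lemma hasDerivAt_Ffun (z Z C : Matrix (Fin n) (Fin n) ℂ) (s : ℝ) :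
    HasDerivAt (Ffun z Z C) (Ffun z Z (C * Zᵀ) s) s := by
  letI : SeminormedRing (Matrix (Fin n) (Fin n) ℂ) := Matrix.linftyOpSemiNormedRing
  letI : NormedRing (Matrix (Fin n) (Fin n) ℂ) := Matrix.linftyOpNormedRing
  letI : NormedAlgebra ℂ (Matrix (Fin n) (Fin n) ℂ) := Matrix.linftyOpNormedAlgebra
  have h1 : HasDerivAt (fun u : ℂ => NormedSpace.exp (u • Z))
      (NormedSpace.exp ((s : ℂ) • Z) * Z) (s : ℂ) := hasDerivAt_exp_smul_const Z (s : ℂ)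
  have h2 : HasDerivAt (fun y : ℝ => NormedSpace.exp ((y : ℂ) • Z))
      (NormedSpace.exp ((s : ℂ) • Z) * Z) s := by
    refine ((h1.hasFDerivAt.restrictScalars ℝ).comp_hasDerivAt s Complex.ofRealCLM.hasDerivAt).congr_deriv ?_
    show ((1:ℝ):ℂ) • (NormedSpace.exp ((s : ℂ) • Z) * Z) = _
    simp
  have h3 := ((LinearMap.toContinuousLinearMap (FLmap z C)).restrictScalars
      ℝ).hasFDerivAt.comp_hasDerivAt s h2
  have h4 : HasDerivAt (Ffun z Z C) (FLmap z C (NormedSpace.exp ((s : ℂ) • Z) * Z)) s := h3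
  convert h4 using 1
  show Ffun z Z (C * Zᵀ) s = ∑ j, ∑ m, C j m * (z * (NormedSpace.exp ((s : ℂ) • Z) * Z)) j m
  rw [Ffun_shift]; rfl

/-- Rank-one coefficient matrices used to express column functionals. -/
def Hmat (v : Fin n → ℂ) (γ : Fin n) (W : Matrix (Fin n) (Fin n) ℂ) :
    Matrix (Fin n) (Fin n) ℂ :=
  Matrix.of fun j l => v j * W l γ

lemma Hmat_mulT (v : Fin n → ℂ) (γ : Fin n) (W Z : Matrix (Fin n) (Fin n) ℂ) :
    Hmat v γ W * Zᵀ = Hmat v γ (Z * W) := by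
  ext j l
  simp only [Hmat, Matrix.mul_apply, Matrix.transpose_apply, Matrix.of_apply, Finset.mul_sum]
  exact Finset.sum_congr rfl fun m _ => by ring

lemma Ffun_Hmat (z Z : Matrix (Fin n) (Fin n) ℂ) (v : Fin n → ℂ) (γ : Fin n)
    (W : Matrix (Fin n) (Fin n) ℂ) (s : ℝ) :
    Ffun z Z (Hmat v γ W) s = ∑ j, v j * (z * NormedSpace.exp ((s : ℂ) • Z) * W) j γ := by
  refine Finset.sum_congr rfl fun j _ => ?_
  simp only [Hmat, Matrix.mul_apply (M := z * NormedSpace.exp ((s : ℂ) • Z)), Matrix.of_apply,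
    Finset.mul_sum]
  exact Finset.sum_congr rfl fun m _ => by ring

lemma Ffun_Hmat_zero (z Z : Matrix (Fin n) (Fin n) ℂ) (v : Fin n → ℂ) (γ : Fin n)
    (W : Matrix (Fin n) (Fin n) ℂ) :
    Ffun z Z (Hmat v γ W) 0 = ∑ j, v j * (z * W) j γ := by
  rw [Ffun_Hmat]
  simp [NormedSpace.exp_zero]

end Aux
section Aux2

variable {n : ℕ}

lemma lieD2_div (z Z : Matrix (Fin n) (Fin n) ℂ) (v w : Fin n → ℂ) (γ δ : Fin n)
    (hb : (∑ k, w k * z k δ) ≠ 0) :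
    lieD2 (fun m => (∑ j, v j * m j γ) / (∑ k, w k * m k δ)) z Z =
      (((∑ j, v j * (z * (Z * Z)) j γ) * (∑ k, w k * z k δ)
          - (∑ j, v j * z j γ) * (∑ k, w k * (z * (Z * Z)) k δ)) * (∑ k, w k * z k δ)
        - 2 * ((∑ j, v j * (z * Z) j γ) * (∑ k, w k * z k δ)
            - (∑ j, v j * z j γ) * (∑ k, w k * (z * Z) k δ)) * (∑ k, w k * (z * Z) k δ))
        / (∑ k, w k * z k δ) ^ 3 := by
  classical
  set A0 : ℝ → ℂ := Ffun z Z (Hmat v γ 1) with hA0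
  set A1 : ℝ → ℂ := Ffun z Z (Hmat v γ Z) with hA1
  set A2 : ℝ → ℂ := Ffun z Z (Hmat v γ (Z * Z)) with hA2
  set B0 : ℝ → ℂ := Ffun z Z (Hmat w δ 1) with hB0
  set B1 : ℝ → ℂ := Ffun z Z (Hmat w δ Z) with hB1
  set B2 : ℝ → ℂ := Ffun z Z (Hmat w δ (Z * Z)) with hB2
  have hdA0 : ∀ s : ℝ, HasDerivAt A0 (A1 s) s := by
    intro s
    have := hasDerivAt_Ffun z Z (Hmat v γ 1) s
    rwa [Hmat_mulT, mul_one] at this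
  have hdA1 : ∀ s : ℝ, HasDerivAt A1 (A2 s) s := by
    intro s
    have := hasDerivAt_Ffun z Z (Hmat v γ Z) s
    rwa [Hmat_mulT] at this
  have hdB0 : ∀ s : ℝ, HasDerivAt B0 (B1 s) s := by
    intro s
    have := hasDerivAt_Ffun z Z (Hmat w δ 1) s
    rwa [Hmat_mulT, mul_one] at this
  have hdB1 : ∀ s : ℝ, HasDerivAt B1 (B2 s) s := by
    intro s
    have := hasDerivAt_Ffun z Z (Hmat w δ Z) s
    rwa [Hmat_mulT] at this
  have hA00 : A0 0 = ∑ j, v j * z j γ := by rw [hA0, Ffun_Hmat_zero, Matrix.mul_one]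
  have hA10 : A1 0 = ∑ j, v j * (z * Z) j γ := Ffun_Hmat_zero z Z v γ Z
  have hA20 : A2 0 = ∑ j, v j * (z * (Z * Z)) j γ := Ffun_Hmat_zero z Z v γ (Z * Z)
  have hB00 : B0 0 = ∑ k, w k * z k δ := by rw [hB0, Ffun_Hmat_zero, Matrix.mul_one]
  have hB10 : B1 0 = ∑ k, w k * (z * Z) k δ := Ffun_Hmat_zero z Z w δ Z
  have hB20 : B2 0 = ∑ k, w k * (z * (Z * Z)) k δ := Ffun_Hmat_zero z Z w δ (Z * Z)
  have hb0 : B0 0 ≠ 0 := by rw [hB00]; exact hb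
  have hfun : (fun s : ℝ => (fun m => (∑ j, v j * m j γ) / (∑ k, w k * m k δ))
      (z * NormedSpace.exp ((s : ℂ) • Z))) = fun s => A0 s / B0 s := by
    funext s
    rw [hA0, hB0, Ffun_Hmat, Ffun_Hmat, Matrix.mul_one]
  have hevB : ∀ᶠ s in nhds (0 : ℝ), B0 s ≠ 0 :=
    (hdB0 0).continuousAt.eventually_ne hb0
  have hg' : deriv (fun s => A0 s / B0 s) =ᶠ[nhds (0 : ℝ)]
      fun s => (A1 s * B0 s - A0 s * B1 s) / (B0 s * B0 s) :=
    hevB.mono fun s hs => by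
      simpa [sq] using ((hdA0 s).fun_div (hdB0 s) hs).deriv
  have hnum : HasDerivAt (fun s => A1 s * B0 s - A0 s * B1 s)
      (A2 0 * B0 0 + A1 0 * B1 0 - (A1 0 * B1 0 + A0 0 * B2 0)) 0 :=
    ((hdA1 0).mul (hdB0 0)).sub ((hdA0 0).mul (hdB1 0))
  have hden : HasDerivAt (fun s => B0 s * B0 s) (B1 0 * B0 0 + B0 0 * B1 0) 0 :=
    (hdB0 0).mul (hdB0 0)
  have hq := hnum.fun_div hden (mul_ne_zero hb0 hb0)
  have : lieD2 (fun m => (∑ j, v j * m j γ) / (∑ k, w k * m k δ)) z Z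
      = deriv (fun s => (A1 s * B0 s - A0 s * B1 s) / (B0 s * B0 s)) 0 := by
    rw [lieD2, hfun, hg'.deriv_eq]
  rw [this, hq.deriv, hA00, hA10, hA20, hB00, hB10, hB20]
  field_simp
  ring

end Aux2
section Aux3

variable {n : ℕ}

/-- Sum over the orthonormal basis of `u(n)`. -/
def bsum (n : ℕ) (φ : Matrix (Fin n) (Fin n) ℂ → ℂ) : ℂ :=
  (∑ r : Fin n, ∑ s : Fin n, if r < s then
      φ (matY n r s) + φ (Complex.I • matX n r s) else 0)
  + ∑ t : Fin n, φ (Complex.I • matE n t t)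

lemma tauU_eq_bsum (f : Matrix (Fin n) (Fin n) ℂ → ℂ) (z : Matrix (Fin n) (Fin n) ℂ) :
    tauU n f z = bsum n (fun Z => lieD2 f z Z) := rfl

lemma bsum_congr {φ ψ : Matrix (Fin n) (Fin n) ℂ → ℂ} (h : ∀ Z, φ Z = ψ Z) :
    bsum n φ = bsum n ψ := by
  simp only [bsum, h]

lemma bsum_div (d : ℂ) (φ : Matrix (Fin n) (Fin n) ℂ → ℂ) :
    bsum n (fun Z => φ Z / d) = bsum n φ / d := by
  simp only [bsum, add_div, Finset.sum_div]
  congr 1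
  refine Finset.sum_congr rfl fun r _ => Finset.sum_congr rfl fun s _ => ?_
  split_ifs
  · rw [add_div]
  · rw [zero_div]

lemma bsum_add (φ ψ : Matrix (Fin n) (Fin n) ℂ → ℂ) :
    bsum n (fun Z => φ Z + ψ Z) = bsum n φ + bsum n ψ := by
  have h : ∀ r s : Fin n,
      (if r < s then (φ (matY n r s) + ψ (matY n r s))
          + (φ (Complex.I • matX n r s) + ψ (Complex.I • matX n r s)) else 0)
        = (if r < s then φ (matY n r s) + φ (Complex.I • matX n r s) else 0)
          + (if r < s then ψ (matY n r s) + ψ (Complex.I • matX n r s) else 0) := by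
    intro r s; split_ifs <;> ring
  simp only [bsum, h, Finset.sum_add_distrib]
  ring

lemma bsum_const_mul (c : ℂ) (φ : Matrix (Fin n) (Fin n) ℂ → ℂ) :
    bsum n (fun Z => c * φ Z) = c * bsum n φ := by
  have h : ∀ r s : Fin n,
      (if r < s then c * φ (matY n r s) + c * φ (Complex.I • matX n r s) else 0)
        = c * (if r < s then φ (matY n r s) + φ (Complex.I • matX n r s) else 0) := by
    intro r s; split_ifs <;> ring
  simp only [bsum, h, ← Finset.mul_sum, mul_add]

/-- `∑ⱼ vⱼ (z·E_{rs})_{jγ} = [γ = s]·∑ⱼ vⱼ z_{jr}`. -/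
lemma lin_mulE (z : Matrix (Fin n) (Fin n) ℂ) (v : Fin n → ℂ) (γ r s : Fin n) :
    ∑ j, v j * (z * matE n r s) j γ
      = (if γ = s then 1 else 0) * ∑ j, v j * z j r := by
  by_cases h : γ = s
  · subst h
    simp [matE, Finset.mul_sum]
  · have h' : s ≠ γ := fun hs => h hs.symm
    simp [matE, Matrix.mul_apply, Matrix.single, h', h]

lemma lin_Y (z : Matrix (Fin n) (Fin n) ℂ) (v : Fin n → ℂ) (γ r s : Fin n) :
    ∑ j, v j * (z * matY n r s) j γ
      = ((Real.sqrt 2 : ℂ))⁻¹ * ((if γ = s then 1 else 0) * (∑ j, v j * z j r)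
          - (if γ = r then 1 else 0) * (∑ j, v j * z j s)) := by
  rw [← lin_mulE z v γ r s, ← lin_mulE z v γ s r]
  simp only [matY, Matrix.mul_smul, Matrix.mul_sub, Matrix.smul_apply, Matrix.sub_apply,
    smul_eq_mul, Finset.mul_sum, ← Finset.sum_sub_distrib]
  exact Finset.sum_congr rfl fun j _ => by ring

lemma lin_X (z : Matrix (Fin n) (Fin n) ℂ) (v : Fin n → ℂ) (γ r s : Fin n) :
    ∑ j, v j * (z * (Complex.I • matX n r s)) j γ
      = Complex.I * (((Real.sqrt 2 : ℂ))⁻¹ * ((if γ = s then 1 else 0) * (∑ j, v j * z j r)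
          + (if γ = r then 1 else 0) * (∑ j, v j * z j s))) := by
  rw [← lin_mulE z v γ r s, ← lin_mulE z v γ s r]
  simp only [matX, Matrix.mul_smul, Matrix.mul_add, Matrix.smul_apply, Matrix.add_apply,
    smul_eq_mul, Finset.mul_sum, ← Finset.sum_add_distrib]
  exact Finset.sum_congr rfl fun j _ => by ring

lemma lin_IE (z : Matrix (Fin n) (Fin n) ℂ) (v : Fin n → ℂ) (γ t : Fin n) :
    ∑ j, v j * (z * (Complex.I • matE n t t)) j γ
      = Complex.I * ((if γ = t then 1 else 0) * (∑ j, v j * z j t)) := by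
  rw [← lin_mulE z v γ t t]
  simp only [Matrix.mul_smul, Matrix.smul_apply, smul_eq_mul, Finset.mul_sum]
  exact Finset.sum_congr rfl fun j _ => by ring

end Aux3
section Aux4

variable {n : ℕ}

lemma YX_sq (r s : Fin n) (h : r ≠ s) :
    matY n r s * matY n r s + (Complex.I • matX n r s) * (Complex.I • matX n r s)
      = -(matE n r r + matE n s s) := by
  have e1 : matE n r s * matE n s r = matE n r r := by
    simp [matE, Matrix.single_mul_single_same]
  have e2 : matE n s r * matE n r s = matE n s s := by
    simp [matE, Matrix.single_mul_single_same]
  have e3 : matE n r s * matE n r s = 0 :=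
    Matrix.single_mul_single_of_ne 1 r s r (fun hh => h hh.symm) 1
  have e4 : matE n s r * matE n s r = 0 :=
    Matrix.single_mul_single_of_ne 1 s r s h 1
  have hY : matY n r s * matY n r s
      = (((Real.sqrt 2 : ℂ))⁻¹ * ((Real.sqrt 2 : ℂ))⁻¹) • (-(matE n r r + matE n s s)) := by
    rw [matY, Matrix.smul_mul, Matrix.mul_smul, smul_smul, sub_mul, mul_sub, mul_sub, e1, e2, e3,
      e4]
    congr 1
    abel
  have hX : (Complex.I • matX n r s) * (Complex.I • matX n r s)
      = (Complex.I * Complex.I) •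
        ((((Real.sqrt 2 : ℂ))⁻¹ * ((Real.sqrt 2 : ℂ))⁻¹) • (matE n r r + matE n s s)) := by
    rw [matX, Matrix.smul_mul, Matrix.mul_smul, smul_smul, Matrix.smul_mul, Matrix.mul_smul,
      smul_smul, add_mul, mul_add, mul_add, e1, e2, e3, e4, smul_smul, smul_smul]
    rw [show (0 : Matrix (Fin n) (Fin n) ℂ) + matE n r r + (matE n s s + 0)
        = matE n r r + matE n s s by abel]
    ring_nf
  rw [hY, hX, sqrt2_inv_sq, Complex.I_mul_I, smul_smul]
  rw [show ((-1 : ℂ) * 2⁻¹) = -(2⁻¹ : ℂ) by ring]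
  rw [neg_smul, smul_neg, ← neg_add, ← add_smul]
  norm_num

end Aux4
section Aux5

variable {n : ℕ}

lemma IE_sq (t : Fin n) :
    (Complex.I • matE n t t) * (Complex.I • matE n t t) = -(matE n t t) := by
  rw [Matrix.smul_mul, Matrix.mul_smul, smul_smul, Complex.I_mul_I]
  rw [show matE n t t * matE n t t = matE n t t by simp [matE]]
  exact neg_one_smul _ _

lemma lin_quad_pair (z : Matrix (Fin n) (Fin n) ℂ) (v : Fin n → ℂ) (γ r s : Fin n)
    (h : r ≠ s) :
    (∑ j, v j * (z * (matY n r s * matY n r s)) j γ)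
      + ∑ j, v j * (z * ((Complex.I • matX n r s) * (Complex.I • matX n r s))) j γ
    = -((if γ = r then 1 else 0) * (∑ j, v j * z j r))
      + -((if γ = s then 1 else 0) * (∑ j, v j * z j s)) := by
  have key : ∀ j : Fin n, (z * (matY n r s * matY n r s)) j γ
      + (z * ((Complex.I • matX n r s) * (Complex.I • matX n r s))) j γ
      = -((z * matE n r r) j γ) - (z * matE n s s) j γ := by
    intro j
    rw [← Matrix.add_apply, ← Matrix.mul_add, YX_sq r s h, Matrix.mul_neg, Matrix.mul_add,
      Matrix.neg_apply, Matrix.add_apply]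
    ring
  rw [← Finset.sum_add_distrib]
  calc ∑ j, (v j * (z * (matY n r s * matY n r s)) j γ
        + v j * (z * ((Complex.I • matX n r s) * (Complex.I • matX n r s))) j γ)
      = ∑ j, (-(v j * (z * matE n r r) j γ) + -(v j * (z * matE n s s) j γ)) :=
        Finset.sum_congr rfl fun j _ => by linear_combination v j * key j
    _ = -((if γ = r then 1 else 0) * (∑ j, v j * z j r))
        + -((if γ = s then 1 else 0) * (∑ j, v j * z j s)) := by
        rw [Finset.sum_add_distrib, Finset.sum_neg_distrib, Finset.sum_neg_distrib,
          lin_mulE, lin_mulE]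

lemma lin_quad_diag (z : Matrix (Fin n) (Fin n) ℂ) (v : Fin n → ℂ) (γ t : Fin n) :
    ∑ j, v j * (z * ((Complex.I • matE n t t) * (Complex.I • matE n t t))) j γ
      = -((if γ = t then 1 else 0) * (∑ j, v j * z j t)) := by
  rw [IE_sq]
  simp only [Matrix.mul_neg, Matrix.neg_apply, mul_neg, Finset.sum_neg_distrib]
  rw [lin_mulE]

lemma bsum_quad (z : Matrix (Fin n) (Fin n) ℂ) (v : Fin n → ℂ) (γ : Fin n) :
    bsum n (fun Z => ∑ j, v j * (z * (Z * Z)) j γ) = -(n : ℂ) * ∑ j, v j * z j γ := by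
  classical
  set g : Fin n → ℂ := fun r => -((if γ = r then 1 else 0) * (∑ j, v j * z j r)) with hg
  have hsg : ∑ r, g r = -(∑ j, v j * z j γ) := by
    rw [hg, Finset.sum_neg_distrib]
    simp [boole_mul, Finset.sum_ite_eq]
  have hoff : ∀ r s : Fin n,
      (if r < s then (∑ j, v j * (z * (matY n r s * matY n r s)) j γ)
          + (∑ j, v j * (z * ((Complex.I • matX n r s) * (Complex.I • matX n r s))) j γ) else 0)
        = (if r < s then g r else 0) + (if r < s then g s else 0) := by
    intro r s
    by_cases hrs : r < s
    · rw [if_pos hrs, if_pos hrs, if_pos hrs, lin_quad_pair z v γ r s (ne_of_lt hrs)]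
    · simp [hrs]
  unfold bsum
  simp only [hoff]
  have hdiag : (∑ t : Fin n, ∑ j, v j * (z * ((Complex.I • matE n t t)
      * (Complex.I • matE n t t))) j γ) = ∑ t, g t :=
    Finset.sum_congr rfl fun t _ => lin_quad_diag z v γ t
  rw [hdiag]
  have h2 : (∑ r : Fin n, ∑ s : Fin n, (if r < s then g s else 0))
      = ∑ r : Fin n, ∑ s : Fin n, (if s < r then g r else 0) := Finset.sum_comm
  simp only [Finset.sum_add_distrib]
  rw [h2, ← Finset.sum_add_distrib]
  have h3 : ∀ r : Fin n, ((∑ s : Fin n, (if r < s then g r else 0))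
      + (∑ s : Fin n, (if s < r then g r else 0))) = (n : ℂ) * g r - g r := by
    intro r
    rw [← Finset.sum_add_distrib]
    have hpt : ∀ s : Fin n, ((if r < s then g r else 0) + (if s < r then g r else 0))
        = g r - (if r = s then g r else 0) := by
      intro s
      rcases lt_trichotomy r s with hh | hh | hh
      · simp [hh, asymm hh, ne_of_lt hh]
      · simp [hh, lt_irrefl]
      · simp [hh, asymm hh, (ne_of_gt hh)]
    simp only [hpt]
    rw [Finset.sum_sub_distrib, Finset.sum_const, Finset.card_univ, Fintype.card_fin,
      Finset.sum_ite_eq]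
    simp [nsmul_eq_mul]
  simp only [h3]
  rw [Finset.sum_sub_distrib, ← Finset.mul_sum, hsg]
  ring

end Aux5
section Aux6

variable {n : ℕ}

lemma bilin_pair (z : Matrix (Fin n) (Fin n) ℂ) (v w : Fin n → ℂ) (γ δ r s : Fin n) :
    (∑ j, v j * (z * matY n r s) j γ) * (∑ k, w k * (z * matY n r s) k δ)
      + (∑ j, v j * (z * (Complex.I • matX n r s)) j γ)
        * (∑ k, w k * (z * (Complex.I • matX n r s)) k δ)
    = -((if γ = s then 1 else 0) * (if δ = r then 1 else 0)
          * ((∑ j, v j * z j r) * (∑ k, w k * z k s))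
        + (if γ = r then 1 else 0) * (if δ = s then 1 else 0)
          * ((∑ j, v j * z j s) * (∑ k, w k * z k r))) := by
  rw [lin_Y, lin_Y, lin_X, lin_X]
  have hc := sqrt2_inv_sq
  have hI := Complex.I_mul_I
  set dgs : ℂ := (if γ = s then (1:ℂ) else 0)
  set dgr : ℂ := (if γ = r then (1:ℂ) else 0)
  set dds : ℂ := (if δ = s then (1:ℂ) else 0)
  set ddr : ℂ := (if δ = r then (1:ℂ) else 0)
  set Vr : ℂ := ∑ j, v j * z j r
  set Vs : ℂ := ∑ j, v j * z j s
  set Wr : ℂ := ∑ k, w k * z k r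
  set Ws : ℂ := ∑ k, w k * z k s
  linear_combination
    ((dgs * Vr - dgr * Vs) * (dds * Wr - ddr * Ws)
      + Complex.I * Complex.I * ((dgs * Vr + dgr * Vs) * (dds * Wr + ddr * Ws))) * hc
    + ((dgs * Vr + dgr * Vs) * (dds * Wr + ddr * Ws) / 2) * hI

lemma bilin_diag (z : Matrix (Fin n) (Fin n) ℂ) (v w : Fin n → ℂ) (γ δ t : Fin n) :
    (∑ j, v j * (z * (Complex.I • matE n t t)) j γ)
        * (∑ k, w k * (z * (Complex.I • matE n t t)) k δ)
      = -((if γ = t then 1 else 0) * (if δ = t then 1 else 0)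
          * ((∑ j, v j * z j t) * (∑ k, w k * z k t))) := by
  rw [lin_IE, lin_IE]
  have hI := Complex.I_mul_I
  linear_combination ((if γ = t then (1:ℂ) else 0) * (∑ j, v j * z j t)
    * ((if δ = t then (1:ℂ) else 0) * (∑ k, w k * z k t))) * hI

lemma bsum_bilin (z : Matrix (Fin n) (Fin n) ℂ) (v w : Fin n → ℂ) (γ δ : Fin n) :
    bsum n (fun Z => (∑ j, v j * (z * Z) j γ) * (∑ k, w k * (z * Z) k δ))
      = -((∑ j, v j * z j δ) * (∑ k, w k * z k γ)) := by
  classical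
  set F1 : Fin n → Fin n → ℂ := fun r s => if γ = s then (if δ = r then
    (if r < s then -((∑ j, v j * z j r) * (∑ k, w k * z k s)) else 0) else 0) else 0 with hF1
  set F2 : Fin n → Fin n → ℂ := fun r s => if δ = s then (if γ = r then
    (if r < s then -((∑ j, v j * z j s) * (∑ k, w k * z k r)) else 0) else 0) else 0 with hF2
  have hoff : ∀ r s : Fin n,
      (if r < s then (∑ j, v j * (z * matY n r s) j γ) * (∑ k, w k * (z * matY n r s) k δ)
          + (∑ j, v j * (z * (Complex.I • matX n r s)) j γ)
            * (∑ k, w k * (z * (Complex.I • matX n r s)) k δ) else 0)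
        = F1 r s + F2 r s := by
    intro r s
    by_cases hrs : r < s
    · rw [if_pos hrs, bilin_pair, hF1, hF2]
      simp only [if_pos hrs]
      split_ifs <;> ring
    · rw [if_neg hrs, hF1, hF2]
      simp only [if_neg hrs]
      split_ifs <;> ring
  have hdiag : ∀ t : Fin n,
      (∑ j, v j * (z * (Complex.I • matE n t t)) j γ)
          * (∑ k, w k * (z * (Complex.I • matE n t t)) k δ)
        = (if γ = t then (if δ = t then
            -((∑ j, v j * z j t) * (∑ k, w k * z k t)) else 0) else 0) := by
    intro t
    rw [bilin_diag]
    split_ifs <;> ring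
  unfold bsum
  simp only [hoff, hdiag, Finset.sum_add_distrib]
  have e1 : (∑ r : Fin n, ∑ s : Fin n, F1 r s)
      = (if δ < γ then -((∑ j, v j * z j δ) * (∑ k, w k * z k γ)) else 0) := by
    have estep : ∀ r : Fin n, (∑ s : Fin n, F1 r s) = (if δ = r then
        (if r < γ then -((∑ j, v j * z j r) * (∑ k, w k * z k γ)) else 0) else 0) := by
      intro r
      rw [hF1]
      rw [Finset.sum_ite_eq]
      simp
    simp only [estep]
    rw [Finset.sum_ite_eq]
    simp
  have e2 : (∑ r : Fin n, ∑ s : Fin n, F2 r s)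
      = (if γ < δ then -((∑ j, v j * z j δ) * (∑ k, w k * z k γ)) else 0) := by
    have estep : ∀ r : Fin n, (∑ s : Fin n, F2 r s) = (if γ = r then
        (if r < δ then -((∑ j, v j * z j δ) * (∑ k, w k * z k r)) else 0) else 0) := by
      intro r
      rw [hF2]
      rw [Finset.sum_ite_eq]
      simp
    simp only [estep]
    rw [Finset.sum_ite_eq]
    simp
  have e3 : (∑ t : Fin n, (if γ = t then (if δ = t then
      -((∑ j, v j * z j t) * (∑ k, w k * z k t)) else 0) else 0))
      = (if δ = γ then -((∑ j, v j * z j δ) * (∑ k, w k * z k γ)) else 0) := by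
    rw [Finset.sum_ite_eq]
    simp only [Finset.mem_univ, if_true]
    by_cases h : δ = γ
    · rw [if_pos h, if_pos h, h]
    · rw [if_neg h, if_neg h]
  rw [e1, e2, e3]
  rcases lt_trichotomy δ γ with h | h | h
  · simp [h, asymm h, ne_of_lt h, ne_of_gt h]
  · simp [h, lt_irrefl]
  · simp [h, asymm h, ne_of_lt h, ne_of_gt h]

end Aux6
section Aux7

variable {n : ℕ}

theorem tau_formula (z : Matrix (Fin n) (Fin n) ℂ) (v w : Fin n → ℂ) (γ δ : Fin n)
    (hb : (∑ k, w k * z k δ) ≠ 0) :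
    tauU n (fun m => (∑ j, v j * m j γ) / (∑ k, w k * m k δ)) z
      = 2 * ((∑ j, v j * z j δ) * (∑ k, w k * z k γ)
          - (∑ j, v j * z j γ) * (∑ k, w k * z k δ)) / (∑ k, w k * z k δ) ^ 2 := by
  rw [tauU_eq_bsum]
  rw [bsum_congr (fun Z => lieD2_div z Z v w γ δ hb)]
  set b0 : ℂ := ∑ k, w k * z k δ with hb0
  set a0 : ℂ := ∑ j, v j * z j γ with ha0
  have hrepr : ∀ Z : Matrix (Fin n) (Fin n) ℂ,
      (((∑ j, v j * (z * (Z * Z)) j γ) * b0 - a0 * (∑ k, w k * (z * (Z * Z)) k δ)) * b0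
        - 2 * ((∑ j, v j * (z * Z) j γ) * b0 - a0 * (∑ k, w k * (z * Z) k δ))
            * (∑ k, w k * (z * Z) k δ)) / b0 ^ 3
      = ((b0 * b0) * (∑ j, v j * (z * (Z * Z)) j γ)
          + ((-(a0 * b0)) * (∑ k, w k * (z * (Z * Z)) k δ)
            + ((-(2 * b0)) * ((∑ j, v j * (z * Z) j γ) * (∑ k, w k * (z * Z) k δ))
              + (2 * a0) * ((∑ k, w k * (z * Z) k δ) * (∑ k, w k * (z * Z) k δ)))))
          / b0 ^ 3 := by
    intro Z
    ring
  rw [bsum_congr hrepr]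
  rw [bsum_div, bsum_add, bsum_add, bsum_add, bsum_const_mul, bsum_const_mul, bsum_const_mul,
    bsum_const_mul, bsum_quad z v γ, bsum_quad z w δ, bsum_bilin z v w γ δ, bsum_bilin z w w δ δ]
  field_simp
  ring

end Aux7
/-- with `P(z) = Σ_j p_j z_{jα}` and `Q(z) = Σ_k q_k z_{kβ}` for linearly
independent `p, q ∈ ℂⁿ`, the quotient `f = P/Q` is harmonic on
`W_Q = {z ∈ U(n) : Q(z) ≠ 0}` if and only if `α = β`. -/
theorem harmonic_quotient_linear_unitary (n : ℕ) (hn : 1 ≤ n) (α β : Fin n)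
    (p q : Fin n → ℂ) (hpq : LinearIndependent ℂ ![p, q]) :
    (∀ z : Matrix (Fin n) (Fin n) ℂ, z ∈ Matrix.unitaryGroup (Fin n) ℂ →
        (∑ k, q k * z k β) ≠ 0 →
        tauU n (fun w => (∑ j, p j * w j α) / (∑ k, q k * w k β)) z = 0)
      ↔ α = β := by
  constructor
  · intro hτ
    by_contra hne
    -- a nonvanishing 2×2 minor
    have hminor : ∃ j k : Fin n, p j * q k - p k * q j ≠ 0 := by
      by_contra hmin
      push_neg at hmin
      have hp : p ≠ 0 := by
        have := hpq.ne_zero 0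
        simpa using this
      obtain ⟨j0, hj0⟩ : ∃ j0, p j0 ≠ 0 := by
        by_contra hh
        push_neg at hh
        exact hp (funext hh)
      have hcomb : (q j0 / p j0) • p + (-1 : ℂ) • q = 0 := by
        funext k
        have h0 := hmin j0 k
        simp only [Pi.add_apply, Pi.smul_apply, smul_eq_mul, Pi.zero_apply]
        field_simp
        linear_combination -h0
      have := (LinearIndependent.pair_iff.mp hpq (q j0 / p j0) (-1) hcomb).2
      norm_num at this
    obtain ⟨j, k, hjk⟩ := hminor
    -- choose suitable indices a, b with q a ≠ 0
    obtain ⟨a, b, hqa, hnum⟩ : ∃ a b : Fin n, q a ≠ 0 ∧ p a * q b - p b * q a ≠ 0 := by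
      by_cases hqj : q j = 0
      · refine ⟨k, j, ?_, ?_⟩
        · intro hqk
          rw [hqj, hqk] at hjk
          simp at hjk
        · intro hh
          apply hjk
          rw [hqj] at hh ⊢
          linear_combination -hh
      · exact ⟨j, k, hqj, hjk⟩
    -- a permutation sending β ↦ a and α ↦ b
    obtain ⟨σ, hσβ, hσα⟩ : ∃ σ : Equiv.Perm (Fin n), σ β = a ∧ σ α = b := by
      refine ⟨(Equiv.swap β a).trans (Equiv.swap ((Equiv.swap β a) α) b), ?_, ?_⟩
      · have h1 : (Equiv.swap β a) β = a := Equiv.swap_apply_left β a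
        have h2 : a ≠ (Equiv.swap β a) α := by
          intro hh
          apply hne
          exact ((Equiv.swap β a).injective (h1.trans hh)).symm
        have h3 : a ≠ b := by
          intro hh
          apply hnum
          rw [hh]
          ring
        simp only [Equiv.trans_apply, h1]
        exact Equiv.swap_apply_of_ne_of_ne h2 h3
      · simp only [Equiv.trans_apply]
        exact Equiv.swap_apply_left _ b
    set z : Matrix (Fin n) (Fin n) ℂ :=
      Matrix.of (fun i j' => if i = σ j' then (1 : ℂ) else 0) with hz
    have hcol : ∀ (u : Fin n → ℂ) (γ : Fin n), (∑ i, u i * z i γ) = u (σ γ) := by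
      intro u γ
      simp only [hz, Matrix.of_apply, mul_ite, mul_one, mul_zero]
      simp
    have hzu : z ∈ Matrix.unitaryGroup (Fin n) ℂ := by
      rw [Matrix.mem_unitaryGroup_iff]
      ext i i'
      rw [Matrix.mul_apply, Matrix.one_apply]
      have hterm : ∀ j' : Fin n, z i j' * (star z) j' i'
          = (if i = σ j' then (1:ℂ) else 0) * (if i' = σ j' then (1:ℂ) else 0) := by
        intro j'
        simp [hz, Matrix.star_apply, apply_ite (star : ℂ → ℂ)]
      simp only [hterm]
      refine (Finset.sum_eq_single (σ.symm i) ?_ ?_).trans ?_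
      · intro j' _ hne'
        have : ¬ i = σ j' := by
          intro hh
          exact hne' (by rw [hh]; simp)
        simp [this]
      · intro hh
        exact absurd (Finset.mem_univ _) hh
      · simp [Equiv.apply_symm_apply, eq_comm]
    have hQz : (∑ k', q k' * z k' β) ≠ 0 := by
      rw [hcol, hσβ]
      exact hqa
    have htz := hτ z hzu hQz
    rw [tau_formula z p q α β hQz, hcol, hcol, hcol, hcol, hσα, hσβ] at htz
    rw [div_eq_zero_iff] at htz
    rcases htz with h1 | h1
    · rcases mul_eq_zero.mp h1 with h2 | h2
      · norm_num at h2
      · exact hnum h2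
    · exact pow_ne_zero 2 hqa h1
  · rintro rfl
    intro z hzU hQ
    rw [tau_formula z p q α α hQ, sub_self, mul_zero, zero_div]

end
end

section
/- Let n ≥ 1 and 1 ≤ α, β ≤ n. Let p, q ∈ ℂⁿ be linearly independent and define P, Q : ℂ^{n×n} → ℂ by P(z) = Σ_j p_j z_{jα} and Q(z) = Σ_k q_k z_{kβ}. Let f = P/Q on the open subset W_Q = {z ∈ U(n) : Q(z) ≠ 0} of U(n). Then f is proper biharmonic (i.e. τ²(f) vanishes identically on W_Q but τ(f) does not vanish identically on W_Q) if and only if α ≠ β. -/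
open Matrix

noncomputable section

section Aux
attribute [local instance] Matrix.linftyOpNormedRing Matrix.linftyOpNormedAlgebra

variable {n : ℕ}

abbrev Mat (n : ℕ) := Matrix (Fin n) (Fin n) ℂ

/-- Linear coordinate form `w ↦ ∑ j, u j * w j γ`. -/
def Lf (u : Fin n → ℂ) (γ : Fin n) (w : Mat n) : ℂ := ∑ j, u j * w j γ

/-- The structured sum over the orthonormal basis `B` of `u(n)`. -/
def sumB (n : ℕ) (F : Mat n → ℂ) : ℂ :=
  (∑ r : Fin n, ∑ s : Fin n, if r < s then
      F (matY n r s) + F (Complex.I • matX n r s) else 0)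
  + ∑ t : Fin n, F (Complex.I • matE n t t)

theorem tauU_eq_sumB (f : Mat n → ℂ) (z : Mat n) :
    tauU n f z = sumB n (fun Z => lieD2 f z Z) := rfl

theorem sumB_congr {F G : Mat n → ℂ} (h : ∀ Z, F Z = G Z) : sumB n F = sumB n G := by
  simp only [sumB, h]

theorem sumB_add (F G : Mat n → ℂ) :
    sumB n (fun Z => F Z + G Z) = sumB n F + sumB n G := by
  simp only [sumB, Finset.sum_add_distrib]
  have : ∀ (r s : Fin n),
      (if r < s then (F (matY n r s) + G (matY n r s)) +
        (F (Complex.I • matX n r s) + G (Complex.I • matX n r s)) else 0)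
      = (if r < s then F (matY n r s) + F (Complex.I • matX n r s) else 0)
        + (if r < s then G (matY n r s) + G (Complex.I • matX n r s) else 0) := by
    intro r s; split_ifs <;> ring
  simp only [this, Finset.sum_add_distrib]
  ring

theorem sumB_mul (c : ℂ) (F : Mat n → ℂ) :
    sumB n (fun Z => c * F Z) = c * sumB n F := by
  simp only [sumB, Finset.mul_sum, mul_add]
  congr 1
  refine Finset.sum_congr rfl fun r _ => Finset.sum_congr rfl fun s _ => ?_
  split_ifs <;> ring

theorem sumB_sum {ι : Type*} (t : Finset ι) (F : ι → Mat n → ℂ) :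
    sumB n (fun Z => ∑ i ∈ t, F i Z) = ∑ i ∈ t, sumB n (F i) := by
  classical
  induction t using Finset.induction_on with
  | empty => simp [sumB]
  | insert _ _ h ih =>
      rw [Finset.sum_insert h]
      rw [sumB_congr (fun Z => by rw [Finset.sum_insert h]), sumB_add, ih]

/-- Kronecker delta -/
def dl (a b : Fin n) : ℂ := if a = b then 1 else 0

theorem matE_apply (r s a b : Fin n) : matE n r s a b = dl r a * dl s b := by
  simp only [matE, Matrix.single, Matrix.of_apply, dl]
  split_ifs <;> simp_all

theorem matY_apply (r s a b : Fin n) :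
    matY n r s a b = ((Real.sqrt 2 : ℂ))⁻¹ * (dl r a * dl s b - dl s a * dl r b) := by
  simp [matY, Matrix.smul_apply, Matrix.sub_apply, matE_apply, smul_eq_mul]

theorem matiX_apply (r s a b : Fin n) :
    (Complex.I • matX n r s) a b
      = Complex.I * (((Real.sqrt 2 : ℂ))⁻¹ * (dl r a * dl s b + dl s a * dl r b)) := by
  simp [matX, Matrix.smul_apply, Matrix.add_apply, matE_apply, smul_eq_mul]; ring

theorem matiE_apply (t a b : Fin n) :
    (Complex.I • matE n t t) a b = Complex.I * (dl t a * dl t b) := by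
  simp [Matrix.smul_apply, matE_apply, smul_eq_mul]

theorem hw2 : ((Real.sqrt 2 : ℂ))⁻¹ * ((Real.sqrt 2 : ℂ))⁻¹ = 1 / 2 := by
  rw [← mul_inv]
  norm_num [← Complex.ofReal_mul, Real.mul_self_sqrt]

theorem sum_lt_pairs (g : Fin n → Fin n → ℂ) :
    ((∑ r, ∑ s, if r < s then g r s + g s r else 0) + ∑ t, g t t)
      = ∑ r, ∑ s, g r s := by
  have h1 : ∀ r s : Fin n, (if r < s then g r s + g s r else 0)
      = (if r < s then g r s else 0) + (if r < s then g s r else 0) := by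
    intro r s; split_ifs <;> ring
  simp only [h1, Finset.sum_add_distrib]
  have h2 : (∑ r, ∑ s, if r < s then g s r else 0)
      = ∑ r, ∑ s, if s < r then g r s else 0 := by
    rw [Finset.sum_comm]
  rw [h2]
  have h3 : ∀ t : Fin n, g t t = ∑ s, if t = s then g t s else 0 := by
    intro t; simp
  simp only [h3]
  simp only [← Finset.sum_add_distrib]
  refine Finset.sum_congr rfl fun r _ => Finset.sum_congr rfl fun s _ => ?_
  rcases lt_trichotomy r s with h | h | h
  · simp [h, not_lt_of_gt h, h.ne]
  · simp [h, lt_irrefl]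
  · simp [h, not_lt_of_gt h, h.ne', (h.ne).symm]

/-- The key identity `∑_{Z ∈ B} Z_{aγ} Z_{bδ} = -δ_{aδ} δ_{bγ}`. -/
theorem sumB_quad (a γ b δ : Fin n) :
    sumB n (fun Z => Z a γ * Z b δ) = -(dl a δ * dl b γ) := by
  set w : ℂ := ((Real.sqrt 2 : ℂ))⁻¹ with hw
  have hI : Complex.I * Complex.I = -1 := Complex.I_mul_I
  have hA : ∀ r s : Fin n,
      (matY n r s a γ * matY n r s b δ
        + (Complex.I • matX n r s) a γ * (Complex.I • matX n r s) b δ)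
      = -((dl r a * dl r δ * (dl s γ * dl s b)) + (dl s a * dl s δ * (dl r γ * dl r b))) := by
    intro r s
    rw [matY_apply, matY_apply, matiX_apply, matiX_apply]
    have hw' : w * w = 1 / 2 := hw2
    linear_combination (-2 * ((dl r a * dl r δ * (dl s γ * dl s b))
        + (dl s a * dl s δ * (dl r γ * dl r b)))) * hw'
      + (w * w * ((dl r a * dl s γ + dl s a * dl r γ) * (dl r b * dl s δ + dl s b * dl r δ))) * hI
  have hB : ∀ t : Fin n,
      (Complex.I • matE n t t) a γ * (Complex.I • matE n t t) b δ
      = -(dl t a * dl t δ * (dl t γ * dl t b)) := by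
    intro t
    rw [matiE_apply, matiE_apply]
    linear_combination (dl t a * dl t γ * (dl t b * dl t δ)) * hI
  have key : sumB n (fun Z => Z a γ * Z b δ)
      = ∑ r, ∑ s, -(dl r a * dl r δ * (dl s γ * dl s b)) := by
    rw [sumB]
    simp only [hA, hB]
    have := sum_lt_pairs (n := n) (fun r s => -(dl r a * dl r δ * (dl s γ * dl s b)))
    rw [← this]
    congr 1
    refine Finset.sum_congr rfl fun r _ => Finset.sum_congr rfl fun s _ => ?_
    split_ifs <;> ring
  rw [key]
  have e1 : (∑ r : Fin n, ∑ s : Fin n, -(dl r a * dl r δ * (dl s γ * dl s b)))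
      = -∑ r : Fin n, ∑ s : Fin n, (dl r a * dl r δ) * (dl s γ * dl s b) := by
    simp [Finset.sum_neg_distrib]
  have d1 : ∀ x y : Fin n, (∑ r, dl r x * dl r y) = dl x y := by
    intro x y
    simp [dl, Finset.sum_ite_eq, eq_comm]
  rw [e1, ← Finset.sum_mul_sum, d1, d1]
  have : dl γ b = dl b γ := by simp [dl, eq_comm]
  rw [this]

theorem sumB_kappa (u v : Fin n → ℂ) (γ δ : Fin n) (z : Mat n) :
    sumB n (fun Z => Lf u γ (z * Z) * Lf v δ (z * Z)) = -(Lf u δ z * Lf v γ z) := by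
  have expand : ∀ (u : Fin n → ℂ) (γ : Fin n) (Z : Mat n),
      Lf u γ (z * Z) = ∑ jc : Fin n × Fin n, (u jc.1 * z jc.1 jc.2) * Z jc.2 γ := by
    intro u γ Z
    rw [Fintype.sum_prod_type]
    unfold Lf
    refine Finset.sum_congr rfl fun j _ => ?_
    rw [Matrix.mul_apply, Finset.mul_sum]
    exact Finset.sum_congr rfl fun c _ => by ring
  have h1 : ∀ Z : Mat n, Lf u γ (z * Z) * Lf v δ (z * Z)
      = ∑ jc : Fin n × Fin n, ∑ kd : Fin n × Fin n,
          ((u jc.1 * z jc.1 jc.2) * (v kd.1 * z kd.1 kd.2)) * (Z jc.2 γ * Z kd.2 δ) := by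
    intro Z
    rw [expand, expand, Finset.sum_mul_sum]
    exact Finset.sum_congr rfl fun jc _ => Finset.sum_congr rfl fun kd _ => by ring
  rw [sumB_congr h1, sumB_sum]
  have h2 : ∀ jc : Fin n × Fin n,
      sumB n (fun Z => ∑ kd : Fin n × Fin n,
          ((u jc.1 * z jc.1 jc.2) * (v kd.1 * z kd.1 kd.2)) * (Z jc.2 γ * Z kd.2 δ))
      = ∑ kd : Fin n × Fin n,
          ((u jc.1 * z jc.1 jc.2) * (v kd.1 * z kd.1 kd.2)) * -(dl jc.2 δ * dl kd.2 γ) := by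
    intro jc
    rw [sumB_sum]
    exact Finset.sum_congr rfl fun kd _ => by rw [sumB_mul, sumB_quad]
  rw [Finset.sum_congr rfl fun jc _ => h2 jc]
  have e2 : ∀ (u : Fin n → ℂ) (x : Fin n),
      (∑ jc : Fin n × Fin n, (u jc.1 * z jc.1 jc.2) * dl jc.2 x) = Lf u x z := by
    intro u x
    rw [Fintype.sum_prod_type]
    unfold Lf
    refine Finset.sum_congr rfl fun j _ => ?_
    simp [dl, mul_ite, Finset.sum_ite_eq]
  rw [← e2 u δ, ← e2 v γ, Finset.sum_mul_sum]
  simp only [← Finset.sum_neg_distrib]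
  exact Finset.sum_congr rfl fun jc _ => Finset.sum_congr rfl fun kd _ => by ring

theorem sumB_casimir (u : Fin n → ℂ) (γ : Fin n) (z : Mat n) :
    sumB n (fun Z => Lf u γ (z * (Z * Z))) = -(n : ℂ) * Lf u γ z := by
  have h1 : ∀ Z : Mat n, Lf u γ (z * (Z * Z))
      = ∑ jab : Fin n × Fin n × Fin n,
          (u jab.1 * z jab.1 jab.2.1) * (Z jab.2.1 jab.2.2 * Z jab.2.2 γ) := by
    intro Z
    rw [Fintype.sum_prod_type]
    unfold Lf
    refine Finset.sum_congr rfl fun j _ => ?_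
    rw [Matrix.mul_apply, Finset.mul_sum, Fintype.sum_prod_type]
    refine Finset.sum_congr rfl fun a _ => ?_
    rw [Matrix.mul_apply, Finset.mul_sum, Finset.mul_sum]
    exact Finset.sum_congr rfl fun b _ => by ring
  rw [sumB_congr h1, sumB_sum]
  have h2 : ∀ jab : Fin n × Fin n × Fin n,
      sumB n (fun Z => (u jab.1 * z jab.1 jab.2.1) * (Z jab.2.1 jab.2.2 * Z jab.2.2 γ))
      = (u jab.1 * z jab.1 jab.2.1) * -(dl jab.2.1 γ) := by
    intro jab
    rw [sumB_mul, sumB_quad]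
    simp [dl]
  rw [Finset.sum_congr rfl fun jab _ => h2 jab]
  rw [Fintype.sum_prod_type]
  unfold Lf
  rw [Finset.mul_sum]
  refine Finset.sum_congr rfl fun j _ => ?_
  rw [Fintype.sum_prod_type]
  simp only [Finset.sum_const, Finset.card_univ, Fintype.card_fin, nsmul_eq_mul]
  simp [dl, mul_ite, Finset.sum_ite_eq]

def LfL (u : Fin n → ℂ) (γ : Fin n) (z M : Mat n) : Mat n →L[ℂ] ℂ :=
  LinearMap.toContinuousLinearMap
  { toFun := fun W => Lf u γ (z * W * M)
    map_add' := by
      intro W V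
      simp [Lf, Matrix.mul_add, Matrix.add_mul, Matrix.add_apply, mul_add,
        Finset.sum_add_distrib]
    map_smul' := by
      intro c W
      simp [Lf, Matrix.mul_smul, Matrix.smul_mul, Matrix.smul_apply, Finset.mul_sum,
        smul_eq_mul]
      exact Finset.sum_congr rfl fun j _ => by ring }

theorem continuous_Lf (u : Fin n → ℂ) (γ : Fin n) : Continuous (Lf u γ) := by
  have this1 := (LfL u γ 1 1).continuous
  have e1 : ⇑(LfL u γ 1 1) = Lf u γ := by
    funext W
    show Lf u γ (1 * W * 1) = Lf u γ W
    rw [one_mul, mul_one]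
  rwa [e1] at this1

def Lc (u : Fin n → ℂ) (γ : Fin n) (z Z M : Mat n) : ℝ → ℂ :=
  fun s => Lf u γ (z * NormedSpace.exp ((s : ℂ) • Z) * M)

theorem hasDerivAt_Lc (u : Fin n → ℂ) (γ : Fin n) (z Z M : Mat n) (s : ℝ) :
    HasDerivAt (Lc u γ z Z M) (Lc u γ z Z (Z * M) s) s := by
  have h1 : HasDerivAt (fun t : ℂ => NormedSpace.exp (t • Z))
      (NormedSpace.exp (((s : ℝ) : ℂ) • Z) * Z) ((s : ℝ) : ℂ) :=
    hasDerivAt_exp_smul_const Z _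
  have h2 := ((LfL u γ z M).hasFDerivAt.comp_hasDerivAt _ h1).comp_ofReal
  have e1 : ∀ W, (LfL u γ z M) W = Lf u γ (z * W * M) := fun W => rfl
  simp only [e1, Function.comp_def] at h2
  convert h2 using 2
  rw [Lc]
  show Lf u γ (z * NormedSpace.exp ((s : ℂ) • Z) * (Z * M))
    = Lf u γ (z * (NormedSpace.exp ((s : ℂ) • Z) * Z) * M)
  rw [← mul_assoc, ← mul_assoc]

theorem continuous_Lc (u : Fin n → ℂ) (γ : Fin n) (z Z M : Mat n) :
    Continuous (Lc u γ z Z M) :=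
  continuous_iff_continuousAt.mpr fun s => (hasDerivAt_Lc u γ z Z M s).continuousAt

theorem Lc_zero (u : Fin n → ℂ) (γ : Fin n) (z Z M : Mat n) :
    Lc u γ z Z M 0 = Lf u γ (z * M) := by
  simp [Lc, NormedSpace.exp_zero]

theorem hasDerivAt_Lc1 (u : Fin n → ℂ) (γ : Fin n) (z Z : Mat n) (s : ℝ) :
    HasDerivAt (Lc u γ z Z 1) (Lc u γ z Z Z s) s := by
  have := hasDerivAt_Lc u γ z Z 1 s
  rwa [mul_one] at this

theorem lieD2_quot (u v : Fin n → ℂ) (γ δ : Fin n) (z Z : Mat n)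
    (hz : Lf v δ z ≠ 0) :
    lieD2 (fun w => Lf u γ w / Lf v δ w) z Z
      = (1 / Lf v δ z) * Lf u γ (z * (Z * Z))
        + (-(Lf u γ z) / (Lf v δ z) ^ 2) * Lf v δ (z * (Z * Z))
        + (-2 / (Lf v δ z) ^ 2) * (Lf u γ (z * Z) * Lf v δ (z * Z))
        + ((2 * Lf u γ z) / (Lf v δ z) ^ 3) * (Lf v δ (z * Z) * Lf v δ (z * Z)) := by
  set x0 := Lc u γ z Z 1
  set x1 := Lc u γ z Z Z
  set x2 := Lc u γ z Z (Z * Z)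
  set y0 := Lc v δ z Z 1
  set y1 := Lc v δ z Z Z
  set y2 := Lc v δ z Z (Z * Z)
  have hx0 : ∀ s, HasDerivAt x0 (x1 s) s := hasDerivAt_Lc1 u γ z Z
  have hx1 : ∀ s, HasDerivAt x1 (x2 s) s := hasDerivAt_Lc u γ z Z Z
  have hy0 : ∀ s, HasDerivAt y0 (y1 s) s := hasDerivAt_Lc1 v δ z Z
  have hy1 : ∀ s, HasDerivAt y1 (y2 s) s := hasDerivAt_Lc v δ z Z Z
  have h00 : y0 0 = Lf v δ z := by
    have := Lc_zero v δ z Z 1; rwa [mul_one] at this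
  have hy00 : y0 0 ≠ 0 := by rw [h00]; exact hz
  have hmem : (y0 ⁻¹' {c | c ≠ 0}) ∈ nhds (0 : ℝ) :=
    (IsOpen.preimage (continuous_Lc v δ z Z 1) isOpen_ne).mem_nhds hy00
  set D1 : ℝ → ℂ := fun s => (x1 s * y0 s - x0 s * y1 s) / y0 s ^ 2 with hD1def
  have hF : ∀ s : ℝ, y0 s ≠ 0 → HasDerivAt (fun t => x0 t / y0 t) (D1 s) s :=
    fun s hs => (hx0 s).div (hy0 s) hs
  have e0 : lieD2 (fun w => Lf u γ w / Lf v δ w) z Z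
      = deriv (deriv (fun s : ℝ => x0 s / y0 s)) 0 := by
    unfold lieD2
    congr 2
    funext s
    simp only [x0, y0, Lc, mul_one]
  have hev : deriv (fun t => x0 t / y0 t) =ᶠ[nhds (0:ℝ)] D1 := by
    filter_upwards [hmem] with s hs
    exact (hF s hs).deriv
  have h2 : deriv (deriv fun t => x0 t / y0 t) 0 = deriv D1 0 :=
    Filter.EventuallyEq.deriv_eq hev
  have hpow : HasDerivAt (fun s => y0 s ^ 2) (y1 0 * y0 0 + y0 0 * y1 0) 0 := by
    have h := (hy0 0).mul (hy0 0); rw [← pow_two] at h; exact h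
  have hD1 := (((hx1 0).mul (hy0 0)).sub ((hx0 0).mul (hy1 0))).div hpow (pow_ne_zero 2 hy00)
  rw [e0, h2]
  refine Eq.trans hD1.deriv ?_
  simp only [Pi.sub_apply, Pi.mul_apply]
  have ex0 : x0 0 = Lf u γ z := by
    have := Lc_zero u γ z Z 1; rwa [mul_one] at this
  have ex1 : x1 0 = Lf u γ (z * Z) := Lc_zero u γ z Z Z
  have ex2 : x2 0 = Lf u γ (z * (Z * Z)) := Lc_zero u γ z Z (Z * Z)
  have ey1 : y1 0 = Lf v δ (z * Z) := Lc_zero v δ z Z Z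
  have ey2 : y2 0 = Lf v δ (z * (Z * Z)) := Lc_zero v δ z Z (Z * Z)
  rw [ex0, ex1, ex2, h00, ey1, ey2]
  field_simp [hz]
  ring

set_option maxHeartbeats 2000000 in
theorem lieD2_gshape (u₁ u₂ u₃ v : Fin n → ℂ) (γ₁ γ₂ γ₃ δ : Fin n) (z Z : Mat n)
    (hz : Lf v δ z ≠ 0) :
    lieD2 (fun w => 2 * (Lf u₁ γ₁ w * Lf u₂ γ₂ w) / Lf v δ w ^ 2
        - 2 * Lf u₃ γ₃ w / Lf v δ w) z Z
      = (2 * Lf u₂ γ₂ z / Lf v δ z ^ 2) * Lf u₁ γ₁ (z * (Z * Z))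
        + (4 / Lf v δ z ^ 2) * (Lf u₁ γ₁ (z * Z) * Lf u₂ γ₂ (z * Z))
        + (2 * Lf u₁ γ₁ z / Lf v δ z ^ 2) * Lf u₂ γ₂ (z * (Z * Z))
        + (-8 * Lf u₂ γ₂ z / Lf v δ z ^ 3) * (Lf u₁ γ₁ (z * Z) * Lf v δ (z * Z))
        + (-8 * Lf u₁ γ₁ z / Lf v δ z ^ 3) * (Lf u₂ γ₂ (z * Z) * Lf v δ (z * Z))
        + (-4 * Lf u₁ γ₁ z * Lf u₂ γ₂ z / Lf v δ z ^ 3) * Lf v δ (z * (Z * Z))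
        + (12 * Lf u₁ γ₁ z * Lf u₂ γ₂ z / Lf v δ z ^ 4) * (Lf v δ (z * Z) * Lf v δ (z * Z))
        + (-2 / Lf v δ z) * Lf u₃ γ₃ (z * (Z * Z))
        + (4 / Lf v δ z ^ 2) * (Lf u₃ γ₃ (z * Z) * Lf v δ (z * Z))
        + (2 * Lf u₃ γ₃ z / Lf v δ z ^ 2) * Lf v δ (z * (Z * Z))
        + (-4 * Lf u₃ γ₃ z / Lf v δ z ^ 3) * (Lf v δ (z * Z) * Lf v δ (z * Z)) := by
  set a0 := Lc u₁ γ₁ z Z 1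
  set a1 := Lc u₁ γ₁ z Z Z
  set a2 := Lc u₁ γ₁ z Z (Z * Z)
  set b0 := Lc u₂ γ₂ z Z 1
  set b1 := Lc u₂ γ₂ z Z Z
  set b2 := Lc u₂ γ₂ z Z (Z * Z)
  set c0 := Lc u₃ γ₃ z Z 1
  set c1 := Lc u₃ γ₃ z Z Z
  set c2 := Lc u₃ γ₃ z Z (Z * Z)
  set y0 := Lc v δ z Z 1
  set y1 := Lc v δ z Z Z
  set y2 := Lc v δ z Z (Z * Z)
  have ha0 : ∀ s, HasDerivAt a0 (a1 s) s := hasDerivAt_Lc1 u₁ γ₁ z Z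
  have ha1 : ∀ s, HasDerivAt a1 (a2 s) s := hasDerivAt_Lc u₁ γ₁ z Z Z
  have hb0 : ∀ s, HasDerivAt b0 (b1 s) s := hasDerivAt_Lc1 u₂ γ₂ z Z
  have hb1 : ∀ s, HasDerivAt b1 (b2 s) s := hasDerivAt_Lc u₂ γ₂ z Z Z
  have hc0 : ∀ s, HasDerivAt c0 (c1 s) s := hasDerivAt_Lc1 u₃ γ₃ z Z
  have hc1 : ∀ s, HasDerivAt c1 (c2 s) s := hasDerivAt_Lc u₃ γ₃ z Z Z
  have hy0 : ∀ s, HasDerivAt y0 (y1 s) s := hasDerivAt_Lc1 v δ z Z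
  have hy1 : ∀ s, HasDerivAt y1 (y2 s) s := hasDerivAt_Lc v δ z Z Z
  have h00 : y0 0 = Lf v δ z := by
    have := Lc_zero v δ z Z 1; rwa [mul_one] at this
  have hy00 : y0 0 ≠ 0 := by rw [h00]; exact hz
  have hmem : (y0 ⁻¹' {c | c ≠ 0}) ∈ nhds (0 : ℝ) :=
    (IsOpen.preimage (continuous_Lc v δ z Z 1) isOpen_ne).mem_nhds hy00
  have hpow : ∀ s, HasDerivAt (fun t => y0 t ^ 2) (y1 s * y0 s + y0 s * y1 s) s := by
    intro s; have h := (hy0 s).mul (hy0 s); rw [← pow_two] at h; exact h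
  set D1g : ℝ → ℂ := fun s =>
      (2 * (a1 s * b0 s + a0 s * b1 s) * y0 s ^ 2
        - 2 * (a0 s * b0 s) * (y1 s * y0 s + y0 s * y1 s)) / (y0 s ^ 2) ^ 2
      - (2 * c1 s * y0 s - 2 * c0 s * y1 s) / y0 s ^ 2 with hD1def
  have hG : ∀ s : ℝ, y0 s ≠ 0 →
      HasDerivAt (fun t => 2 * (a0 t * b0 t) / y0 t ^ 2 - 2 * c0 t / y0 t) (D1g s) s := by
    intro s hs
    have hq1 := (HasDerivAt.const_mul (2:ℂ) ((ha0 s).mul (hb0 s))).div (hpow s)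
      (pow_ne_zero 2 hs)
    have hq2 := (HasDerivAt.const_mul (2:ℂ) (hc0 s)).div (hy0 s) hs
    exact hq1.sub hq2
  have e0 : lieD2 (fun w => 2 * (Lf u₁ γ₁ w * Lf u₂ γ₂ w) / Lf v δ w ^ 2
      - 2 * Lf u₃ γ₃ w / Lf v δ w) z Z
      = deriv (deriv (fun s : ℝ => 2 * (a0 s * b0 s) / y0 s ^ 2 - 2 * c0 s / y0 s)) 0 := by
    unfold lieD2
    congr 2
    funext s
    simp only [a0, b0, c0, y0, Lc, mul_one]
  have hev : deriv (fun t => 2 * (a0 t * b0 t) / y0 t ^ 2 - 2 * c0 t / y0 t)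
      =ᶠ[nhds (0:ℝ)] D1g := by
    filter_upwards [hmem] with s hs
    exact (hG s hs).deriv
  have h2 : deriv (deriv fun t => 2 * (a0 t * b0 t) / y0 t ^ 2 - 2 * c0 t / y0 t) 0
      = deriv D1g 0 := Filter.EventuallyEq.deriv_eq hev
  have hA := (HasDerivAt.const_mul (2:ℂ)
      (((ha1 0).mul (hb0 0)).add ((ha0 0).mul (hb1 0)))).mul (hpow 0)
  have hB := (HasDerivAt.const_mul (2:ℂ) ((ha0 0).mul (hb0 0))).mul
      (((hy1 0).mul (hy0 0)).add ((hy0 0).mul (hy1 0)))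
  have hDEN : HasDerivAt (fun t => (y0 t ^ 2) ^ 2)
      ((y1 0 * y0 0 + y0 0 * y1 0) * y0 0 ^ 2 + y0 0 ^ 2 * (y1 0 * y0 0 + y0 0 * y1 0)) 0 := by
    have h := (hpow 0).mul (hpow 0); rw [← pow_two] at h; exact h
  have hq1' := (hA.sub hB).div hDEN (pow_ne_zero 2 (pow_ne_zero 2 hy00))
  have hN2 := ((HasDerivAt.const_mul (2:ℂ) (hc1 0)).mul (hy0 0)).sub
      ((HasDerivAt.const_mul (2:ℂ) (hc0 0)).mul (hy1 0))
  have hq2' := hN2.div (hpow 0) (pow_ne_zero 2 hy00)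
  have hD2 := hq1'.sub hq2'
  rw [e0, h2]
  refine Eq.trans hD2.deriv ?_
  simp only [Pi.sub_apply, Pi.mul_apply, Pi.add_apply]
  have ea0 : a0 0 = Lf u₁ γ₁ z := by
    have := Lc_zero u₁ γ₁ z Z 1; rwa [mul_one] at this
  have eb0 : b0 0 = Lf u₂ γ₂ z := by
    have := Lc_zero u₂ γ₂ z Z 1; rwa [mul_one] at this
  have ec0 : c0 0 = Lf u₃ γ₃ z := by
    have := Lc_zero u₃ γ₃ z Z 1; rwa [mul_one] at this
  have ea1 : a1 0 = Lf u₁ γ₁ (z * Z) := Lc_zero u₁ γ₁ z Z Z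
  have eb1 : b1 0 = Lf u₂ γ₂ (z * Z) := Lc_zero u₂ γ₂ z Z Z
  have ec1 : c1 0 = Lf u₃ γ₃ (z * Z) := Lc_zero u₃ γ₃ z Z Z
  have ey1 : y1 0 = Lf v δ (z * Z) := Lc_zero v δ z Z Z
  have ea2 : a2 0 = Lf u₁ γ₁ (z * (Z * Z)) := Lc_zero u₁ γ₁ z Z (Z * Z)
  have eb2 : b2 0 = Lf u₂ γ₂ (z * (Z * Z)) := Lc_zero u₂ γ₂ z Z (Z * Z)
  have ec2 : c2 0 = Lf u₃ γ₃ (z * (Z * Z)) := Lc_zero u₃ γ₃ z Z (Z * Z)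
  have ey2 : y2 0 = Lf v δ (z * (Z * Z)) := Lc_zero v δ z Z (Z * Z)
  rw [ea0, eb0, ec0, ea1, eb1, ec1, ey1, ea2, eb2, ec2, ey2, h00]
  field_simp [hz]
  ring_nf

/-- `tauU` only depends on the germ of the function near the base point. -/
theorem tauU_congr_nhds {F G : Mat n → ℂ} {z : Mat n} (h : ∀ᶠ w in nhds z, F w = G w) :
    tauU n F z = tauU n G z := by
  have key : ∀ Z : Mat n, lieD2 F z Z = lieD2 G z Z := by
    intro Z
    have hexp : Continuous (fun s : ℝ => z * NormedSpace.exp ((s : ℂ) • Z)) :=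
      continuous_const.mul
        (NormedSpace.exp_continuous.comp ((Complex.continuous_ofReal).smul continuous_const))
    have h0 : z * NormedSpace.exp (((0 : ℝ) : ℂ) • Z) = z := by
      simp [NormedSpace.exp_zero]
    have ht : Filter.Tendsto (fun s : ℝ => z * NormedSpace.exp ((s : ℂ) • Z))
        (nhds 0) (nhds z) := by
      have := hexp.tendsto 0
      rwa [h0] at this
    have hev : (fun s : ℝ => F (z * NormedSpace.exp ((s : ℂ) • Z)))
        =ᶠ[nhds (0 : ℝ)] (fun s => G (z * NormedSpace.exp ((s : ℂ) • Z))) :=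
      ht.eventually h
    unfold lieD2
    exact Filter.EventuallyEq.deriv_eq (Filter.EventuallyEq.deriv hev)
  rw [tauU_eq_sumB, tauU_eq_sumB]
  exact sumB_congr key

theorem tau_quot (u v : Fin n → ℂ) (γ δ : Fin n) (z : Mat n) (hz : Lf v δ z ≠ 0) :
    tauU n (fun w => Lf u γ w / Lf v δ w) z
      = 2 * (Lf u δ z * Lf v γ z) / Lf v δ z ^ 2 - 2 * Lf u γ z / Lf v δ z := by
  rw [tauU_eq_sumB]
  rw [sumB_congr (fun Z => lieD2_quot u v γ δ z Z hz)]
  simp only [sumB_add, sumB_mul, sumB_casimir, sumB_kappa]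
  field_simp [hz]
  ring

theorem tau_g (p q : Fin n → ℂ) (α β : Fin n) (z : Mat n) (hz : Lf q β z ≠ 0) :
    tauU n (fun w => 2 * (Lf p β w * Lf q α w) / Lf q β w ^ 2
        - 2 * Lf p α w / Lf q β w) z = 0 := by
  rw [tauU_eq_sumB]
  rw [sumB_congr (fun Z => lieD2_gshape p q p q β α α β z Z hz)]
  simp only [sumB_add, sumB_mul, sumB_casimir, sumB_kappa]
  field_simp [hz]
  ring_nf

/-- permutation-type unitary matrix -/
def permM (σ : Equiv.Perm (Fin n)) : Mat n :=
  Matrix.of fun a b => if a = σ b then (1 : ℂ) else 0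

theorem permM_mem (σ : Equiv.Perm (Fin n)) :
    permM σ ∈ Matrix.unitaryGroup (Fin n) ℂ := by
  rw [Matrix.mem_unitaryGroup_iff]
  ext a b
  rw [Matrix.mul_apply, Matrix.one_apply]
  have : ∀ c : Fin n, permM σ a c * (star (permM σ)) c b
      = if c = σ.symm a then (if a = b then (1:ℂ) else 0) else 0 := by
    intro c
    simp only [permM, Matrix.star_apply, Matrix.of_apply]
    have hst : star (if b = σ c then (1:ℂ) else 0) = if b = σ c then (1:ℂ) else 0 := by
      split_ifs <;> simp
    rw [hst]
    rcases eq_or_ne c (σ.symm a) with h | h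
    · subst h
      simp only [Equiv.apply_symm_apply, if_true, if_pos rfl]
      rcases eq_or_ne a b with h2 | h2
      · subst h2; simp
      · simp [h2, Ne.symm h2]
    · have : a ≠ σ c := by
        intro hc
        exact h (by rw [hc, Equiv.symm_apply_apply])
      simp [this, h]
  simp only [this, Finset.sum_ite_eq', Finset.mem_univ, if_true]

theorem Lf_permM (u : Fin n → ℂ) (γ : Fin n) (σ : Equiv.Perm (Fin n)) :
    Lf u γ (permM σ) = u (σ γ) := by
  unfold Lf
  have : ∀ j : Fin n, u j * permM σ j γ = if j = σ γ then u j else 0 := by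
    intro j
    simp only [permM, Matrix.of_apply]
    split_ifs <;> simp
  simp only [this, Finset.sum_ite_eq', Finset.mem_univ, if_true]

end Aux
/-- with `P(z) = Σ_j p_j z_{jα}` and `Q(z) = Σ_k q_k z_{kβ}` for linearly
independent `p, q ∈ ℂⁿ`, the quotient `f = P/Q` is proper biharmonic on
`W_Q = {z ∈ U(n) : Q(z) ≠ 0}` (i.e. `τ²(f) = 0` on `W_Q` while `τ(f)` does not vanish
identically on `W_Q`) if and only if `α ≠ β`. -/
theorem proper_biharmonic_quotient_linear_unitary (n : ℕ) (hn : 1 ≤ n) (α β : Fin n)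
    (p q : Fin n → ℂ) (hpq : LinearIndependent ℂ ![p, q]) :
    ((∀ z : Matrix (Fin n) (Fin n) ℂ, z ∈ Matrix.unitaryGroup (Fin n) ℂ →
        (∑ k, q k * z k β) ≠ 0 →
        tauU n (tauU n (fun w => (∑ j, p j * w j α) / (∑ k, q k * w k β))) z = 0)
      ∧ ¬ (∀ z : Matrix (Fin n) (Fin n) ℂ, z ∈ Matrix.unitaryGroup (Fin n) ℂ →
        (∑ k, q k * z k β) ≠ 0 →
        tauU n (fun w => (∑ j, p j * w j α) / (∑ k, q k * w k β)) z = 0))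
      ↔ α ≠ β := by
  classical
  have hC : ∀ (z : Matrix (Fin n) (Fin n) ℂ), Lf q β z ≠ 0 →
      tauU n (tauU n (fun w => Lf p α w / Lf q β w)) z = 0 := by
    intro z hq
    have hopen : IsOpen {w : Mat n | Lf q β w ≠ 0} :=
      IsOpen.preimage (continuous_Lf q β) isOpen_ne
    have hev : ∀ᶠ w in nhds z, tauU n (fun w => Lf p α w / Lf q β w) w
        = (fun w => 2 * (Lf p β w * Lf q α w) / Lf q β w ^ 2
            - 2 * Lf p α w / Lf q β w) w := by
      filter_upwards [hopen.mem_nhds hq] with w hw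
      exact tau_quot p q α β w hw
    rw [tauU_congr_nhds hev]
    exact tau_g p q α β z hq
  constructor
  · rintro ⟨_, hB⟩
    intro hab
    subst hab
    apply hB
    intro z _ hq
    have hq' : Lf q α z ≠ 0 := hq
    have h1 : tauU n (fun w => Lf p α w / Lf q α w) z = 0 := by
      rw [tau_quot p q α α z hq']
      field_simp
      ring
    exact h1
  · intro hab
    obtain ⟨hq0, hnp⟩ := linearIndependent_fin2.mp hpq
    have hq0' : (q : Fin n → ℂ) ≠ 0 := by simpa using hq0
    have hminor : ∃ j k : Fin n, p j * q k ≠ p k * q j := by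
      by_contra hc
      push_neg at hc
      obtain ⟨k₀, hk₀⟩ := Function.ne_iff.mp hq0'
      have hk₀' : q k₀ ≠ 0 := by simpa using hk₀
      have : (p k₀ / q k₀) • q = p := by
        funext j
        have h1 := hc k₀ j
        show p k₀ / q k₀ * q j = p j
        field_simp
        linear_combination h1
      have h2 := hnp (p k₀ / q k₀)
      simp only [Matrix.cons_val_one, Matrix.head_cons, Matrix.cons_val_zero] at h2
      exact h2 this
    obtain ⟨j₀, k₀, hjk₀⟩ := hminor
    have hstep : ∃ j k : Fin n, p j * q k ≠ p k * q j ∧ q k ≠ 0 := by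
      rcases eq_or_ne (q k₀) 0 with h | h
      · refine ⟨k₀, j₀, fun hc => hjk₀ hc.symm, fun hj => ?_⟩
        apply hjk₀
        rw [h, hj]
        ring
      · exact ⟨j₀, k₀, hjk₀, h⟩
    obtain ⟨j, k, hjk, hqk⟩ := hstep
    have hjkne : j ≠ k := by
      rintro rfl
      exact hjk rfl
    -- build permutation with σ α = j, σ β = k
    set τ : Equiv.Perm (Fin n) := Equiv.swap α j with hτ
    have hτβj : τ β ≠ j := by
      intro h
      have : τ β = τ α := by rw [h, hτ, Equiv.swap_apply_left]
      exact hab (τ.injective this).symm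
    set ρ : Equiv.Perm (Fin n) := Equiv.swap (τ β) k with hρ
    set σ : Equiv.Perm (Fin n) := τ.trans ρ with hσ
    have hσα : σ α = j := by
      rw [hσ]
      simp only [Equiv.trans_apply]
      rw [hτ, Equiv.swap_apply_left, hρ]
      exact Equiv.swap_apply_of_ne_of_ne (Ne.symm hτβj) hjkne
    have hσβ : σ β = k := by
      rw [hσ]
      simp only [Equiv.trans_apply]
      rw [hρ, Equiv.swap_apply_left]
    refine ⟨fun z _ hq => hC z hq, ?_⟩
    intro hall
    have hq' : Lf q β (permM σ) ≠ 0 := by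
      rw [Lf_permM, hσβ]
      exact hqk
    have h0 : tauU n (fun w => Lf p α w / Lf q β w) (permM σ) = 0 :=
      hall (permM σ) (permM_mem σ) hq'
    rw [tau_quot p q α β (permM σ) hq'] at h0
    rw [Lf_permM, Lf_permM, Lf_permM, Lf_permM, hσα, hσβ] at h0
    apply hjk
    have hQ : q k ≠ 0 := hqk
    field_simp at h0
    have h1 : p k * q j - p j * q k = 0 := by
      apply mul_left_cancel₀ hQ
      rw [mul_zero]
      linear_combination (q k / 2) * h0
    linear_combination -h1


end
end

section
/- Let 1 ≤ k ≤ n, let i₁ < … < i_k and α₁ < … < α_k be k row indices and k column indices in {1, …, n}, and let d_k : ℂ^{n×n} → ℂ be the corresponding k×k subdeterminant, d_k(z) = det((z_{i_a α_b})_{1 ≤ a,b ≤ k}). Then on U(n) one has τ(d_k) = −k(n−k+1) d_k, i.e. for every p ∈ U(n), τ(d_k)(p) = −k(n−k+1) d_k(p). -/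
open Matrix

noncomputable section

namespace TauAux

open NormedSpace

/-- Structured sum over the orthonormal basis of `u(n)`. -/
def structSum (n : ℕ) {M : Type*} [AddCommMonoid M] (F : Matrix (Fin n) (Fin n) ℂ → M) : M :=
  (∑ r : Fin n, ∑ s : Fin n, if r < s then F (matY n r s) + F (Complex.I • matX n r s) else 0)
  + ∑ t : Fin n, F (Complex.I • matE n t t)

variable {n : ℕ}

lemma structSum_addHom {M N : Type*} [AddCommMonoid M] [AddCommMonoid N] (φ : M →+ N)
    (F : Matrix (Fin n) (Fin n) ℂ → M) :
    structSum n (fun Z => φ (F Z)) = φ (structSum n F) := by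
  simp only [structSum, map_add, map_sum]
  congr 1
  refine Finset.sum_congr rfl fun r _ => Finset.sum_congr rfl fun s _ => ?_
  split_ifs <;> simp

lemma structSum_zero {M : Type*} [AddCommMonoid M] :
    structSum n (fun _ => (0 : M)) = 0 := by
  simp [structSum]

lemma structSum_add {M : Type*} [AddCommMonoid M] (F G : Matrix (Fin n) (Fin n) ℂ → M) :
    structSum n (fun Z => F Z + G Z) = structSum n F + structSum n G := by
  simp only [structSum]
  have h : ∀ r s : Fin n,
      (if r < s then (F (matY n r s) + G (matY n r s)) + (F (Complex.I • matX n r s) + G (Complex.I • matX n r s)) else 0)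
        = ((if r < s then F (matY n r s) + F (Complex.I • matX n r s) else 0)
          + (if r < s then G (matY n r s) + G (Complex.I • matX n r s) else 0)) := by
    intro r s; split_ifs <;> [abel; simp]
  simp only [h, Finset.sum_add_distrib]
  abel

lemma structSum_sum {M : Type*} [AddCommMonoid M] {ι : Type*} (s : Finset ι)
    (F : ι → Matrix (Fin n) (Fin n) ℂ → M) :
    structSum n (fun Z => ∑ b ∈ s, F b Z) = ∑ b ∈ s, structSum n (F b) := by
  classical
  induction s using Finset.cons_induction with
  | empty => simpa using structSum_zero (n := n) (M := M)
  | cons b s hb ih =>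
      simp only [Finset.sum_cons]
      rw [structSum_add, ih]

lemma delta_mul (p q : Prop) [Decidable p] [Decidable q] (x y : ℂ) :
    (if p then x else 0) * (if q then y else 0) = if p ∧ q then x * y else 0 := by
  split_ifs <;> simp_all

lemma sum_lt_of_symm (T : Fin n → Fin n → ℂ) (h : ∀ r s, T r s = T s r) :
    (∑ r : Fin n, ∑ s : Fin n, if r < s then T r s else 0)
      = 2⁻¹ * ((∑ r : Fin n, ∑ s : Fin n, T r s) - ∑ r : Fin n, T r r) := by
  have h1 : (∑ r : Fin n, ∑ s : Fin n, if s < r then T r s else 0)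
      = ∑ r : Fin n, ∑ s : Fin n, if r < s then T r s else 0 := by
    rw [Finset.sum_comm]
    exact Finset.sum_congr rfl fun r _ => Finset.sum_congr rfl fun s _ => by
      rw [h]
  have h3 : (∑ r : Fin n, ∑ s : Fin n, if r = s then T r s else 0) = ∑ r : Fin n, T r r := by
    refine Finset.sum_congr rfl fun r _ => ?_
    simp
  have h4 : (∑ r : Fin n, ∑ s : Fin n, T r s)
      = (∑ r : Fin n, ∑ s : Fin n, if r < s then T r s else 0)
        + ((∑ r : Fin n, ∑ s : Fin n, if s < r then T r s else 0)
          + (∑ r : Fin n, ∑ s : Fin n, if r = s then T r s else 0)) := by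
    rw [← Finset.sum_add_distrib, ← Finset.sum_add_distrib]
    refine Finset.sum_congr rfl fun r _ => ?_
    rw [← Finset.sum_add_distrib, ← Finset.sum_add_distrib]
    refine Finset.sum_congr rfl fun s _ => ?_
    rcases lt_trichotomy r s with hc | hc | hc
    · simp [hc, lt_asymm hc, ne_of_lt hc]
    · simp [hc, lt_irrefl]
    · simp [hc, lt_asymm hc, (ne_of_lt hc).symm]
  rw [h1, h3] at h4
  rw [h4]
  ring

lemma matE_apply (r s v α : Fin n) :
    matE n r s v α = if r = v ∧ s = α then (1:ℂ) else 0 := rfl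

lemma sum1_delta (f : Fin n → ℂ) (x : Fin n) :
    (∑ r : Fin n, if r = x then f r else 0) = f x := by simp

lemma sum2_delta (f : Fin n → Fin n → ℂ) (x y : Fin n) :
    (∑ r : Fin n, ∑ s : Fin n, if r = x ∧ s = y then f r s else 0) = f x y := by
  rw [Finset.sum_eq_single x]
  · rw [Finset.sum_eq_single y]
    · simp
    · intro s _ hs; simp [hs]
    · intro hx; exact absurd (Finset.mem_univ y) hx
  · intro r _ hr
    refine Finset.sum_eq_zero fun s _ => by simp [hr]
  · intro hx; exact absurd (Finset.mem_univ x) hx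

lemma diagT_sum (v α w β : Fin n) :
    (∑ r : Fin n, -(((if r = v ∧ r = α then (1:ℂ) else 0) * (if r = w ∧ r = β then 1 else 0))
      + ((if r = v ∧ r = α then (1:ℂ) else 0) * (if r = w ∧ r = β then 1 else 0))))
     = -(2 * if v = α ∧ v = w ∧ v = β then (1:ℂ) else 0) := by
  classical
  have sum1_delta : ∀ (f : Fin n → ℂ) (x : Fin n),
      (∑ r : Fin n, if r = x then f r else 0) = f x := by
    intro f x; simp
  have e : ∀ r : Fin n,
      -(((if r = v ∧ r = α then (1:ℂ) else 0) * (if r = w ∧ r = β then 1 else 0))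
        + ((if r = v ∧ r = α then (1:ℂ) else 0) * (if r = w ∧ r = β then 1 else 0)))
      = if r = v then (if v = α ∧ v = w ∧ v = β then (-2:ℂ) else 0) else 0 := by
    intro r
    by_cases hrv : r = v
    · subst hrv
      by_cases h1 : r = α <;> by_cases h2 : r = w <;> by_cases h3 : r = β <;>
        simp [h1, h2, h3] <;>
        first | rfl | ring1 | (split_ifs <;> subst_vars <;> first | rfl | ring1 | simp_all | tauto) | (exfalso; tauto)
    · simp [hrv]
  rw [Finset.sum_congr rfl fun r _ => e r, sum1_delta]
  split_ifs <;> ring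

lemma diagE_sum (v α w β : Fin n) :
    (∑ t : Fin n, (Complex.I • matE n t t) v α * (Complex.I • matE n t t) w β)
      = -(if v = α ∧ v = w ∧ v = β then (1:ℂ) else 0) := by
  classical
  have sum1_delta : ∀ (f : Fin n → ℂ) (x : Fin n),
      (∑ r : Fin n, if r = x then f r else 0) = f x := by
    intro f x; simp
  have e : ∀ t : Fin n, (Complex.I • matE n t t) v α * (Complex.I • matE n t t) w β
      = if t = v then (if v = α ∧ v = w ∧ v = β then (-1:ℂ) else 0) else 0 := by
    intro t
    have d1 : (Complex.I • matE n t t) v α = Complex.I * (if t = v ∧ t = α then 1 else 0) := by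
      simp [matE_apply, Matrix.smul_apply, smul_eq_mul]
    have d2 : (Complex.I • matE n t t) w β = Complex.I * (if t = w ∧ t = β then 1 else 0) := by
      simp [matE_apply, Matrix.smul_apply, smul_eq_mul]
    rw [d1, d2]
    by_cases htv : t = v
    · subst htv
      by_cases h1 : t = α <;> by_cases h2 : t = w <;> by_cases h3 : t = β <;>
        simp [h1, h2, h3, Complex.I_mul_I] <;>
        first | rfl | ring1 | (split_ifs <;> subst_vars <;> first | rfl | ring1 | simp_all | tauto) | (exfalso; tauto)
    · simp [htv]
  rw [Finset.sum_congr rfl fun t _ => e t, sum1_delta]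
  split_ifs <;> ring

/-- The key entry identity:  `Σ_Z Z_{vα} Z_{wβ} = −δ_{vβ} δ_{wα}`. -/
lemma structSum_entry (v α w β : Fin n) :
    structSum n (fun Z => Z v α * Z w β) = -(if v = β ∧ w = α then (1:ℂ) else 0) := by
  classical
  have hc : ((Real.sqrt 2 : ℂ))⁻¹ * ((Real.sqrt 2 : ℂ))⁻¹ = 2⁻¹ := by
    rw [← mul_inv, ← Complex.ofReal_mul, Real.mul_self_sqrt (by norm_num)]
    norm_num
  have hI : Complex.I * Complex.I = -1 := Complex.I_mul_I
  -- the Y/X part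
  have hYX : ∀ r s : Fin n,
      matY n r s v α * matY n r s w β
        + (Complex.I • matX n r s) v α * (Complex.I • matX n r s) w β
      = -(((if r = v ∧ s = α then (1:ℂ) else 0) * (if s = w ∧ r = β then 1 else 0))
          + ((if s = v ∧ r = α then (1:ℂ) else 0) * (if r = w ∧ s = β then 1 else 0))) := by
    intro r s
    have e1 : matY n r s v α
        = ((Real.sqrt 2 : ℂ))⁻¹ * ((if r = v ∧ s = α then (1:ℂ) else 0)
            - (if s = v ∧ r = α then 1 else 0)) := by
      simp [matY, Matrix.smul_apply, Matrix.sub_apply, matE_apply, smul_eq_mul, mul_ite, mul_one, mul_zero]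
    have e2 : matY n r s w β
        = ((Real.sqrt 2 : ℂ))⁻¹ * ((if r = w ∧ s = β then (1:ℂ) else 0)
            - (if s = w ∧ r = β then 1 else 0)) := by
      simp [matY, Matrix.smul_apply, Matrix.sub_apply, matE_apply, smul_eq_mul, mul_ite, mul_one, mul_zero]
    have e3 : (Complex.I • matX n r s) v α
        = Complex.I * (((Real.sqrt 2 : ℂ))⁻¹ * ((if r = v ∧ s = α then (1:ℂ) else 0)
            + (if s = v ∧ r = α then 1 else 0))) := by
      simp [matX, Matrix.smul_apply, Matrix.add_apply, matE_apply, smul_eq_mul, mul_ite, mul_one, mul_zero]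
      split_ifs <;> ring
    have e4 : (Complex.I • matX n r s) w β
        = Complex.I * (((Real.sqrt 2 : ℂ))⁻¹ * ((if r = w ∧ s = β then (1:ℂ) else 0)
            + (if s = w ∧ r = β then 1 else 0))) := by
      simp [matX, Matrix.smul_apply, Matrix.add_apply, matE_apply, smul_eq_mul, mul_ite, mul_one, mul_zero]
      split_ifs <;> ring
    rw [e1, e2, e3, e4]
    set c : ℂ := ((Real.sqrt 2 : ℂ))⁻¹ with hcdef
    set P : ℂ := (if r = v ∧ s = α then (1:ℂ) else 0)
    set Q : ℂ := (if s = v ∧ r = α then (1:ℂ) else 0)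
    set P' : ℂ := (if r = w ∧ s = β then (1:ℂ) else 0)
    set Q' : ℂ := (if s = w ∧ r = β then (1:ℂ) else 0)
    linear_combination ((P - Q) * (P' - Q') + Complex.I * Complex.I * ((P+Q) * (P'+Q'))) * hc
      + (2⁻¹ * ((P+Q) * (P'+Q'))) * hI
  -- helper collapse lemmas
  have sum2_delta : ∀ (f : Fin n → Fin n → ℂ) (x y : Fin n),
      (∑ r : Fin n, ∑ s : Fin n, if r = x ∧ s = y then f r s else 0) = f x y := by
    intro f x y
    rw [Finset.sum_eq_single x]
    · rw [Finset.sum_eq_single y]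
      · simp
      · intro s _ hs; simp [hs]
      · intro hx; exact absurd (Finset.mem_univ y) hx
    · intro r _ hr
      refine Finset.sum_eq_zero fun s _ => by simp [hr]
    · intro hx; exact absurd (Finset.mem_univ x) hx
  have sum1_delta : ∀ (f : Fin n → ℂ) (x : Fin n),
      (∑ r : Fin n, if r = x then f r else 0) = f x := by
    intro f x; simp
  have sum2_delta' : ∀ (f : Fin n → Fin n → ℂ) (x y : Fin n),
      (∑ r : Fin n, ∑ s : Fin n, if s = x ∧ r = y then f r s else 0) = f y x := by
    intro f x y
    rw [Finset.sum_comm]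
    exact sum2_delta (fun s r => f r s) x y
  -- abbreviations
  set T : Fin n → Fin n → ℂ := fun r s =>
    -(((if r = v ∧ s = α then (1:ℂ) else 0) * (if s = w ∧ r = β then 1 else 0))
      + ((if s = v ∧ r = α then (1:ℂ) else 0) * (if r = w ∧ s = β then 1 else 0))) with hT
  have hTsymm : ∀ r s, T r s = T s r := by
    intro r s; rw [hT]; ring
  have hsum1 : (∑ r : Fin n, ∑ s : Fin n,
      if r < s then matY n r s v α * matY n r s w β
        + (Complex.I • matX n r s) v α * (Complex.I • matX n r s) w β else 0)
      = ∑ r : Fin n, ∑ s : Fin n, if r < s then T r s else 0 := by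
    refine Finset.sum_congr rfl fun r _ => Finset.sum_congr rfl fun s _ => ?_
    split_ifs with hrs
    · exact hYX r s
    · rfl
  have hall : (∑ r : Fin n, ∑ s : Fin n, T r s)
      = -(2 * if α = w ∧ v = β then (1:ℂ) else 0) := by
    have e1 : ∀ r s : Fin n,
        ((if r = v ∧ s = α then (1:ℂ) else 0) * (if s = w ∧ r = β then 1 else 0))
        = if r = v ∧ s = α then (if s = w ∧ r = β then (1:ℂ) else 0) else 0 := by
      intro r s; split_ifs <;> first | ring | tauto
    have e2 : ∀ r s : Fin n,
        ((if s = v ∧ r = α then (1:ℂ) else 0) * (if r = w ∧ s = β then 1 else 0))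
        = if s = v ∧ r = α then (if r = w ∧ s = β then (1:ℂ) else 0) else 0 := by
      intro r s; split_ifs <;> first | ring | tauto
    have h1 : (∑ r : Fin n, ∑ s : Fin n,
        ((if r = v ∧ s = α then (1:ℂ) else 0) * (if s = w ∧ r = β then 1 else 0)))
        = if α = w ∧ v = β then (1:ℂ) else 0 := by
      simp only [e1]
      exact sum2_delta (fun r s => if s = w ∧ r = β then (1:ℂ) else 0) v α
    have h2 : (∑ r : Fin n, ∑ s : Fin n,
        ((if s = v ∧ r = α then (1:ℂ) else 0) * (if r = w ∧ s = β then 1 else 0)))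
        = if α = w ∧ v = β then (1:ℂ) else 0 := by
      simp only [e2]
      exact sum2_delta' (fun r s => if r = w ∧ s = β then (1:ℂ) else 0) v α
    calc (∑ r : Fin n, ∑ s : Fin n, T r s)
        = -((∑ r : Fin n, ∑ s : Fin n,
            ((if r = v ∧ s = α then (1:ℂ) else 0) * (if s = w ∧ r = β then 1 else 0)))
          + (∑ r : Fin n, ∑ s : Fin n,
            ((if s = v ∧ r = α then (1:ℂ) else 0) * (if r = w ∧ s = β then 1 else 0)))) := by
          rw [hT]
          simp only [← Finset.sum_add_distrib, ← Finset.sum_neg_distrib]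
      _ = -(2 * if α = w ∧ v = β then (1:ℂ) else 0) := by rw [h1, h2]; ring
  have hdiag : (∑ r : Fin n, T r r)
      = -(2 * if v = α ∧ v = w ∧ v = β then (1:ℂ) else 0) := by
    rw [hT]
    exact diagT_sum v α w β
  have hdiagE := diagE_sum v α w β
  rw [structSum, hsum1, sum_lt_of_symm T hTsymm, hall, hdiag, hdiagE]
  have hcond : (α = w ∧ v = β) ↔ (v = β ∧ w = α) := by
    constructor
    · rintro ⟨h1, h2⟩; exact ⟨h2, h1.symm⟩
    · rintro ⟨h1, h2⟩; exact ⟨h2.symm, h1⟩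
  rw [if_congr hcond rfl rfl]
  ring


lemma structSum_mul_const (F : Matrix (Fin n) (Fin n) ℂ → ℂ) (c : ℂ) :
    structSum n (fun Z => F Z * c) = structSum n F * c :=
  structSum_addHom (AddMonoidHom.mulRight c) F

lemma structSum_const_mul (c : ℂ) (F : Matrix (Fin n) (Fin n) ℂ → ℂ) :
    structSum n (fun Z => c * F Z) = c * structSum n F :=
  structSum_addHom (AddMonoidHom.mulLeft c) F

lemma structSum_pZ (p : Matrix (Fin n) (Fin n) ℂ) (j α k' β : Fin n) :
    structSum n (fun Z => (p * Z) j α * (p * Z) k' β) = -(p j β * p k' α) := by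
  classical
  have h1 : ∀ Z : Matrix (Fin n) (Fin n) ℂ,
      (p * Z) j α * (p * Z) k' β
        = ∑ v : Fin n, ∑ w : Fin n, (p j v * p k' w) * (Z v α * Z w β) := by
    intro Z
    rw [Matrix.mul_apply, Matrix.mul_apply, Finset.sum_mul_sum]
    exact Finset.sum_congr rfl fun v _ => Finset.sum_congr rfl fun w _ => by ring
  calc structSum n (fun Z => (p * Z) j α * (p * Z) k' β)
      = structSum n (fun Z => ∑ v : Fin n, ∑ w : Fin n, (p j v * p k' w) * (Z v α * Z w β)) := by
        exact congrArg _ (funext h1)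
    _ = ∑ v : Fin n, ∑ w : Fin n,
          structSum n (fun Z => (p j v * p k' w) * (Z v α * Z w β)) := by
        rw [structSum_sum]
        exact Finset.sum_congr rfl fun v _ => by rw [structSum_sum]
    _ = ∑ v : Fin n, ∑ w : Fin n,
          (p j v * p k' w) * -(if v = β ∧ w = α then (1:ℂ) else 0) := by
        refine Finset.sum_congr rfl fun v _ => Finset.sum_congr rfl fun w _ => ?_
        rw [structSum_const_mul, structSum_entry]
    _ = ∑ v : Fin n, ∑ w : Fin n,
          (if v = β ∧ w = α then -(p j v * p k' w) else 0) := by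
        refine Finset.sum_congr rfl fun v _ => Finset.sum_congr rfl fun w _ => ?_
        split_ifs <;> ring
    _ = -(p j β * p k' α) := sum2_delta (fun v w => -(p j v * p k' w)) β α

lemma structSum_ZZ_entry (v β : Fin n) :
    structSum n (fun Z => (Z * Z) v β) = -(n : ℂ) * (if v = β then 1 else 0) := by
  classical
  have h1 : ∀ Z : Matrix (Fin n) (Fin n) ℂ,
      (Z * Z) v β = ∑ α : Fin n, Z v α * Z α β := fun Z => Matrix.mul_apply
  calc structSum n (fun Z => (Z * Z) v β)
      = structSum n (fun Z => ∑ α : Fin n, Z v α * Z α β) := congrArg _ (funext h1)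
    _ = ∑ α : Fin n, structSum n (fun Z => Z v α * Z α β) := structSum_sum _ _
    _ = ∑ _α : Fin n, -(if v = β then (1:ℂ) else 0) := by
        refine Finset.sum_congr rfl fun α _ => ?_
        rw [structSum_entry]
        simp
    _ = -(n : ℂ) * (if v = β then 1 else 0) := by
        rw [Finset.sum_const, Finset.card_univ, Fintype.card_fin]
        push_cast
        ring

lemma structSum_pZZ_entry (p : Matrix (Fin n) (Fin n) ℂ) (x y : Fin n) :
    structSum n (fun Z => (p * (Z * Z)) x y) = -(n : ℂ) * p x y := by
  classical
  have h1 : ∀ Z : Matrix (Fin n) (Fin n) ℂ,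
      (p * (Z * Z)) x y = ∑ v : Fin n, p x v * (Z * Z) v y := fun Z => Matrix.mul_apply
  calc structSum n (fun Z => (p * (Z * Z)) x y)
      = ∑ v : Fin n, structSum n (fun Z => p x v * (Z * Z) v y) := by
        rw [congrArg (structSum n) (funext h1), structSum_sum]
    _ = ∑ v : Fin n, p x v * (-(n : ℂ) * (if v = y then 1 else 0)) := by
        refine Finset.sum_congr rfl fun v _ => ?_
        rw [structSum_const_mul, structSum_ZZ_entry]
    _ = ∑ v : Fin n, (if v = y then -(n : ℂ) * p x v else 0) := by
        refine Finset.sum_congr rfl fun v _ => ?_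
        split_ifs <;> ring
    _ = -(n : ℂ) * p x y := sum1_delta (fun v => -(n:ℂ) * p x v) y

section Det

variable {k : ℕ}

lemma det_updateRow_finsum (A : Matrix (Fin k) (Fin k) ℂ) (j : Fin k) {ι : Type*}
    (s : Finset ι) (w : ι → Fin k → ℂ) :
    (A.updateRow j (∑ b ∈ s, w b)).det = ∑ b ∈ s, (A.updateRow j (w b)).det := by
  classical
  induction s using Finset.cons_induction with
  | empty =>
      simp only [Finset.sum_empty]
      exact Matrix.det_eq_zero_of_row_eq_zero j (fun b => by simp)
  | cons b s hb ih =>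
      rw [Finset.sum_cons, Matrix.det_updateRow_add, ih, Finset.sum_cons]

lemma det_updateRow_expand (A : Matrix (Fin k) (Fin k) ℂ) (j : Fin k) (u : Fin k → ℂ) :
    (A.updateRow j u).det
      = ∑ b : Fin k, u b * (A.updateRow j (Pi.single b 1)).det := by
  classical
  have hu : u = ∑ b : Fin k, u b • (Pi.single b (1:ℂ) : Fin k → ℂ) := by
    have h2 : ∀ b : Fin k, u b • (Pi.single b (1:ℂ) : Fin k → ℂ) = Pi.single b (u b) := by
      intro b; ext c
      by_cases h : c = b <;> simp [Pi.single_apply, h]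
    rw [funext h2, Finset.univ_sum_single]
  conv_lhs => rw [hu]
  rw [det_updateRow_finsum]
  exact Finset.sum_congr rfl fun b _ => by rw [Matrix.det_updateRow_smul]

lemma updateRow_comm (A : Matrix (Fin k) (Fin k) ℂ) {j l : Fin k} (hjl : j ≠ l)
    (u v : Fin k → ℂ) :
    (A.updateRow j u).updateRow l v = (A.updateRow l v).updateRow j u := by
  ext r b
  by_cases h1 : r = l <;> by_cases h2 : r = j
  · exact absurd (h2.symm.trans h1) hjl
  · simp [Matrix.updateRow_apply, h1, h2, hjl, hjl.symm]
  · simp [Matrix.updateRow_apply, h1, h2, hjl, hjl.symm]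
  · simp [Matrix.updateRow_apply, h1, h2, hjl, hjl.symm]

lemma det_two_updateRow_expand (A : Matrix (Fin k) (Fin k) ℂ) {j l : Fin k} (hjl : j ≠ l)
    (u v : Fin k → ℂ) :
    ((A.updateRow j u).updateRow l v).det
      = ∑ b : Fin k, ∑ b' : Fin k, u b * v b'
          * ((A.updateRow j (Pi.single b 1)).updateRow l (Pi.single b' 1)).det := by
  classical
  rw [det_updateRow_expand (A.updateRow j u) l v]
  have h1 : ∀ b' : Fin k,
      ((A.updateRow j u).updateRow l (Pi.single b' 1)).det
        = ∑ b : Fin k, u b * ((A.updateRow j (Pi.single b 1)).updateRow l (Pi.single b' 1)).det := by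
    intro b'
    rw [updateRow_comm A hjl, det_updateRow_expand]
    refine Finset.sum_congr rfl fun b _ => ?_
    rw [updateRow_comm A hjl.symm]
  simp only [h1]
  rw [Finset.sum_comm]
  refine Finset.sum_congr rfl fun b _ => ?_
  rw [Finset.mul_sum]
  exact Finset.sum_congr rfl fun b' _ => by ring

lemma det_swap_rows (A : Matrix (Fin k) (Fin k) ℂ) {j l : Fin k} (hjl : j ≠ l) :
    ((A.updateRow j (A l)).updateRow l (A j)).det = -A.det := by
  have h : (A.updateRow j (A l)).updateRow l (A j) = A.submatrix (Equiv.swap j l) id := by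
    ext r b
    by_cases h1 : r = l <;> by_cases h2 : r = j
    · exact absurd (h2.symm.trans h1) hjl
    · subst h1
      simp [Matrix.updateRow_apply, Equiv.swap_apply_right]
    · subst h2
      simp [Matrix.updateRow_apply, h1, Equiv.swap_apply_left]
    · simp [Matrix.updateRow_apply, h1, h2, Equiv.swap_apply_of_ne_of_ne h2 h1]
  rw [h, Matrix.det_permute, Equiv.Perm.sign_swap hjl]
  simp

end Det

lemma hasDerivAt_exp_entry {n : ℕ} (Z : Matrix (Fin n) (Fin n) ℂ) (v α : Fin n) (u : ℂ) :
    HasDerivAt (fun u : ℂ => (exp (u • Z)) v α) ((exp (u • Z) * Z) v α) u := by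
  letI : SeminormedRing (Matrix (Fin n) (Fin n) ℂ) := Matrix.linftyOpSemiNormedRing
  letI : NormedRing (Matrix (Fin n) (Fin n) ℂ) := Matrix.linftyOpNormedRing
  letI : NormedAlgebra ℂ (Matrix (Fin n) (Fin n) ℂ) := Matrix.linftyOpNormedAlgebra
  have h := hasDerivAt_exp_smul_const (𝕂 := ℂ) Z u
  let L : Matrix (Fin n) (Fin n) ℂ →L[ℂ] ℂ :=
    LinearMap.toContinuousLinearMap
      ((LinearMap.proj α).comp (LinearMap.proj (R := ℂ) (φ := fun _ : Fin n => (Fin n → ℂ)) v))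
  have h2 := L.hasFDerivAt.comp_hasDerivAt u h
  exact h2

lemma hasDerivAt_curve_entry {n : ℕ} (p Z : Matrix (Fin n) (Fin n) ℂ) (j α : Fin n) (u : ℂ) :
    HasDerivAt (fun u : ℂ => (p * exp (u • Z)) j α) ((p * exp (u • Z) * Z) j α) u := by
  have h3 : (fun x : ℂ => (p * exp (x • Z)) j α)
      = fun x => ∑ v : Fin n, p j v * (exp (x • Z)) v α := funext fun x => Matrix.mul_apply
  have h4 : (p * exp (u • Z) * Z) j α
      = ∑ v : Fin n, p j v * ((exp (u • Z) * Z) v α) := by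
    rw [mul_assoc]; exact Matrix.mul_apply
  rw [h3, h4]
  exact HasDerivAt.fun_sum fun v _ => (hasDerivAt_exp_entry Z v α u).const_mul (p j v)

lemma hasDerivAt_curve_entry_mulW {n : ℕ} (p Z W : Matrix (Fin n) (Fin n) ℂ) (j α : Fin n) (u : ℂ) :
    HasDerivAt (fun u : ℂ => (p * exp (u • Z) * W) j α)
      ((p * exp (u • Z) * Z * W) j α) u := by
  have h3 : (fun x : ℂ => (p * exp (x • Z) * W) j α)
      = fun x => ∑ w : Fin n, (p * exp (x • Z)) j w * W w α := funext fun x => Matrix.mul_apply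
  have h4 : (p * exp (u • Z) * Z * W) j α
      = ∑ w : Fin n, (p * exp (u • Z) * Z) j w * W w α := Matrix.mul_apply
  rw [h3, h4]
  exact HasDerivAt.fun_sum fun w _ => (hasDerivAt_curve_entry p Z j w u).mul_const (W w α)

def detCML (k : ℕ) : ContinuousMultilinearMap ℂ (fun _ : Fin k => (Fin k → ℂ)) ℂ where
  toMultilinearMap :=
    (Matrix.detRowAlternating : AlternatingMap ℂ (Fin k → ℂ) ℂ (Fin k)).toMultilinearMap
  cont := continuous_id.matrix_det

lemma hasDerivAt_det {k : ℕ} (M M' : ℂ → Matrix (Fin k) (Fin k) ℂ) (u : ℂ)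
    (h : ∀ j b, HasDerivAt (fun u => M u j b) (M' u j b) u) :
    HasDerivAt (fun u => (M u).det)
      (∑ j : Fin k, ((M u).updateRow j (M' u j)).det) u := by
  set x : ℂ → (Fin k → Fin k → ℂ) := fun u j b => M u j b with hxdef
  set x' : Fin k → Fin k → ℂ := fun j b => M' u j b with hx'def
  have hrow : ∀ j, HasDerivAt (fun u => x u j) (x' j) u :=
    fun j => hasDerivAt_pi.2 (fun b => h j b)
  have hx : HasDerivAt x x' u := hasDerivAt_pi.2 hrow
  have hdet := ((detCML k).hasFDerivAt (x := x u)).comp_hasDerivAt u hx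
  rw [ContinuousMultilinearMap.linearDeriv_apply] at hdet
  exact hdet


lemma updateRow_updateRow_same {k : ℕ} (A : Matrix (Fin k) (Fin k) ℂ) (j : Fin k)
    (x y : Fin k → ℂ) : (A.updateRow j x).updateRow j y = A.updateRow j y := by
  ext r b
  by_cases h : r = j <;> simp [Matrix.updateRow_apply, h]

lemma lieD2_det {n k : ℕ} (i a : Fin k → Fin n) (p Z : Matrix (Fin n) (Fin n) ℂ) :
    lieD2 (fun z => (z.submatrix i a).det) p Z
      = ∑ j : Fin k, ∑ l : Fin k,
          (if l = j
            then (((p.submatrix i a).updateRow j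
                    (fun b => (p * Z * Z) (i j) (a b)))).det
            else ((((p.submatrix i a).updateRow j (fun b => (p * Z) (i j) (a b))).updateRow l
                    (fun b => (p * Z) (i l) (a b)))).det) := by
  classical
  set Mfun : ℂ → Matrix (Fin k) (Fin k) ℂ :=
    fun u => (p * exp (u • Z)).submatrix i a with hMdef
  set Bfun : ℂ → Matrix (Fin k) (Fin k) ℂ :=
    fun u => (p * exp (u • Z) * Z).submatrix i a with hBdef
  set Cfun : ℂ → Matrix (Fin k) (Fin k) ℂ :=
    fun u => (p * exp (u • Z) * Z * Z).submatrix i a with hCdef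
  have hM : ∀ (u : ℂ) (j b), HasDerivAt (fun u => Mfun u j b) (Bfun u j b) u := by
    intro u j b
    exact hasDerivAt_curve_entry p Z (i j) (a b) u
  have hB : ∀ (u : ℂ) (j b), HasDerivAt (fun u => Bfun u j b) (Cfun u j b) u := by
    intro u j b
    exact hasDerivAt_curve_entry_mulW p Z Z (i j) (a b) u
  -- first derivative
  set G : ℂ → ℂ := fun u => ∑ j : Fin k, ((Mfun u).updateRow j (Bfun u j)).det with hGdef
  have hF : ∀ u : ℂ, HasDerivAt (fun u => (Mfun u).det) (G u) u := by
    intro u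
    exact hasDerivAt_det Mfun Bfun u (hM u)
  -- second derivative
  set H : ℂ → ℂ := fun u => ∑ j : Fin k, ∑ l : Fin k,
      (((Mfun u).updateRow j (Bfun u j)).updateRow l
        (((Bfun u).updateRow j (Cfun u j)) l)).det with hHdef
  have hG : ∀ u : ℂ, HasDerivAt G (H u) u := by
    intro u
    refine HasDerivAt.fun_sum fun j _ => ?_
    have hN : ∀ l b, HasDerivAt (fun u => ((Mfun u).updateRow j (Bfun u j)) l b)
        (((Bfun u).updateRow j (Cfun u j)) l b) u := by
      intro l b
      by_cases hl : l = j
      · subst hl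
        have e1 : (fun u => ((Mfun u).updateRow l (Bfun u l)) l b)
            = fun u => Bfun u l b := by
          funext u; rw [Matrix.updateRow_self]
        rw [e1, Matrix.updateRow_self]
        exact hB u l b
      · have e1 : (fun u => ((Mfun u).updateRow j (Bfun u j)) l b)
            = fun u => Mfun u l b := by
          funext u; rw [Matrix.updateRow_ne hl]
        rw [e1, Matrix.updateRow_ne hl]
        exact hM u l b
    exact hasDerivAt_det (fun u => (Mfun u).updateRow j (Bfun u j))
      (fun u => (Bfun u).updateRow j (Cfun u j)) u hN
  -- assemble
  have hstep1 : deriv (fun s : ℝ => (Mfun ((s : ℝ) : ℂ)).det) = fun s : ℝ => G ((s : ℝ) : ℂ) := by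
    funext s
    exact ((hF ((s : ℝ) : ℂ)).comp_ofReal).deriv
  have hstep2 : deriv (fun s : ℝ => G ((s : ℝ) : ℂ)) 0 = H 0 := by
    have h0 : HasDerivAt G (H 0) (((0 : ℝ) : ℂ)) := by simpa using hG 0
    exact (h0.comp_ofReal).deriv
  have hlie : lieD2 (fun z => (z.submatrix i a).det) p Z = H 0 := by
    rw [lieD2]
    rw [show (fun s : ℝ => (p * NormedSpace.exp ((s : ℂ) • Z)).submatrix i a |>.det)
        = (fun s : ℝ => (Mfun ((s : ℝ) : ℂ)).det) from rfl]
    rw [hstep1, hstep2]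
  rw [hlie]
  -- evaluate at 0
  have hexp0 : exp ((0 : ℂ) • Z) = 1 := by rw [zero_smul, exp_zero]
  have hM0 : Mfun 0 = p.submatrix i a := by rw [hMdef]; simp [hexp0]
  have hB0 : Bfun 0 = (p * Z).submatrix i a := by rw [hBdef]; simp [hexp0]
  have hC0 : Cfun 0 = (p * Z * Z).submatrix i a := by rw [hCdef]; simp [hexp0]
  rw [hHdef]
  simp only [hM0, hB0, hC0]
  refine Finset.sum_congr rfl fun j _ => Finset.sum_congr rfl fun l _ => ?_
  by_cases hl : l = j
  · subst hl
    rw [if_pos rfl, Matrix.updateRow_self, updateRow_updateRow_same]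
    rfl
  · rw [if_neg hl, Matrix.updateRow_ne hl]
    rfl

lemma structSum_pZZ_entry' (p : Matrix (Fin n) (Fin n) ℂ) (x y : Fin n) :
    structSum n (fun Z => (p * Z * Z) x y) = -(n : ℂ) * p x y := by
  have h : (fun Z : Matrix (Fin n) (Fin n) ℂ => (p * Z * Z) x y)
      = fun Z => (p * (Z * Z)) x y := by
    funext Z; rw [mul_assoc]
  rw [h, structSum_pZZ_entry]

lemma structSum_ite (c : Prop) [Decidable c] (F G : Matrix (Fin n) (Fin n) ℂ → ℂ) :
    structSum n (fun Z => if c then F Z else G Z)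
      = if c then structSum n F else structSum n G := by
  by_cases h : c <;> simp [h]

section Main

variable {k : ℕ}

lemma structSum_diag_det (p : Matrix (Fin n) (Fin n) ℂ) (i a : Fin k → Fin n) (j : Fin k) :
    structSum n (fun Z =>
        ((p.submatrix i a).updateRow j (fun b => (p * Z * Z) (i j) (a b))).det)
      = -(n : ℂ) * (p.submatrix i a).det := by
  classical
  set A := p.submatrix i a with hA
  set D : Fin k → ℂ := fun b => (A.updateRow j (Pi.single b 1)).det with hD
  calc structSum n (fun Z => (A.updateRow j (fun b => (p * Z * Z) (i j) (a b))).det)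
      = structSum n (fun Z => ∑ b : Fin k, (p * Z * Z) (i j) (a b) * D b) :=
        congrArg _ (funext fun Z => by rw [det_updateRow_expand])
    _ = ∑ b : Fin k, structSum n (fun Z => (p * Z * Z) (i j) (a b) * D b) :=
        structSum_sum _ _
    _ = ∑ b : Fin k, (-(n : ℂ) * p (i j) (a b)) * D b := by
        refine Finset.sum_congr rfl fun b _ => ?_
        rw [structSum_mul_const, structSum_pZZ_entry']
    _ = -(n : ℂ) * ∑ b : Fin k, A j b * D b := by
        rw [Finset.mul_sum]
        refine Finset.sum_congr rfl fun b _ => ?_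
        have hab : A j b = p (i j) (a b) := rfl
        rw [hab]; ring
    _ = -(n : ℂ) * A.det := by
        rw [← det_updateRow_expand, Matrix.updateRow_eq_self]

lemma structSum_offdiag_det (p : Matrix (Fin n) (Fin n) ℂ) (i a : Fin k → Fin n)
    {j l : Fin k} (hjl : j ≠ l) :
    structSum n (fun Z =>
        (((p.submatrix i a).updateRow j (fun b => (p * Z) (i j) (a b))).updateRow l
          (fun b => (p * Z) (i l) (a b))).det)
      = (p.submatrix i a).det := by
  classical
  set A := p.submatrix i a with hA
  set D2 : Fin k → Fin k → ℂ :=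
    fun b b' => ((A.updateRow j (Pi.single b 1)).updateRow l (Pi.single b' 1)).det with hD2
  calc structSum n (fun Z =>
        ((A.updateRow j (fun b => (p * Z) (i j) (a b))).updateRow l
          (fun b => (p * Z) (i l) (a b))).det)
      = structSum n (fun Z => ∑ b : Fin k, ∑ b' : Fin k,
          (p * Z) (i j) (a b) * (p * Z) (i l) (a b') * D2 b b') :=
        congrArg _ (funext fun Z => by rw [det_two_updateRow_expand A hjl])
    _ = ∑ b : Fin k, ∑ b' : Fin k, structSum n
          (fun Z => (p * Z) (i j) (a b) * (p * Z) (i l) (a b') * D2 b b') := by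
        rw [structSum_sum]
        exact Finset.sum_congr rfl fun b _ => by rw [structSum_sum]
    _ = ∑ b : Fin k, ∑ b' : Fin k,
          -(p (i j) (a b') * p (i l) (a b)) * D2 b b' := by
        refine Finset.sum_congr rfl fun b _ => Finset.sum_congr rfl fun b' _ => ?_
        rw [structSum_mul_const, structSum_pZ]
    _ = -(∑ b : Fin k, ∑ b' : Fin k, A l b * A j b' * D2 b b') := by
        rw [← Finset.sum_neg_distrib]
        refine Finset.sum_congr rfl fun b _ => ?_
        rw [← Finset.sum_neg_distrib]
        refine Finset.sum_congr rfl fun b' _ => ?_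
        have h1 : A l b = p (i l) (a b) := rfl
        have h2 : A j b' = p (i j) (a b') := rfl
        rw [h1, h2]; ring
    _ = -((A.updateRow j (A l)).updateRow l (A j)).det := by
        rw [det_two_updateRow_expand A hjl]
    _ = A.det := by rw [det_swap_rows A hjl]; ring

end Main

end TauAux

/-- if `d_k` is a `k×k` subdeterminant of the generic element of `U(n)`,
given by strictly increasing row indices `i₁ < … < i_k` and column indices
`α₁ < … < α_k`, then `τ(d_k) = −k(n−k+1)·d_k` on `U(n)`. -/
theorem tau_subdeterminant_unitary (n k : ℕ) (hk : 1 ≤ k) (hkn : k ≤ n)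
    (i a : Fin k → Fin n) (hi : StrictMono i) (ha : StrictMono a)
    (p : Matrix (Fin n) (Fin n) ℂ) (hp : p ∈ Matrix.unitaryGroup (Fin n) ℂ) :
    tauU n (fun z => (z.submatrix i a).det) p
      = -((k : ℂ) * ((n : ℂ) - (k : ℂ) + 1)) * (p.submatrix i a).det := by
  classical
  set d := (p.submatrix i a).det with hd
  have h0 : tauU n (fun z => (z.submatrix i a).det) p
      = TauAux.structSum n (lieD2 (fun z => (z.submatrix i a).det) p) := rfl
  have hform : (lieD2 (fun z => (z.submatrix i a).det) p)
      = fun Z => ∑ j : Fin k, ∑ l : Fin k,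
          (if l = j
            then (((p.submatrix i a).updateRow j
                    (fun b => (p * Z * Z) (i j) (a b)))).det
            else ((((p.submatrix i a).updateRow j (fun b => (p * Z) (i j) (a b))).updateRow l
                    (fun b => (p * Z) (i l) (a b)))).det) :=
    funext fun Z => TauAux.lieD2_det i a p Z
  rw [h0, hform, TauAux.structSum_sum]
  have hinner : ∀ j : Fin k,
      TauAux.structSum n (fun Z => ∑ l : Fin k,
          (if l = j
            then (((p.submatrix i a).updateRow j
                    (fun b => (p * Z * Z) (i j) (a b)))).det
            else ((((p.submatrix i a).updateRow j (fun b => (p * Z) (i j) (a b))).updateRow l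
                    (fun b => (p * Z) (i l) (a b)))).det))
        = ∑ l : Fin k, (if l = j then -(n : ℂ) * d else d) := by
    intro j
    rw [TauAux.structSum_sum]
    refine Finset.sum_congr rfl fun l _ => ?_
    rw [TauAux.structSum_ite]
    by_cases hl : l = j
    · rw [if_pos hl, if_pos hl, TauAux.structSum_diag_det p i a j, hd]
    · rw [if_neg hl, if_neg hl,
        TauAux.structSum_offdiag_det p i a (fun h => hl h.symm), hd]
  rw [Finset.sum_congr rfl fun j _ => hinner j]
  have hrow : ∀ j : Fin k, (∑ l : Fin k, (if l = j then -(n : ℂ) * d else d))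
      = -(n : ℂ) * d + ((k : ℂ) - 1) * d := by
    intro j
    have h1 : ∀ l : Fin k, (if l = j then -(n : ℂ) * d else d)
        = d + (if l = j then -(n : ℂ) * d - d else 0) := by
      intro l; split_ifs <;> ring
    simp only [h1]
    rw [Finset.sum_add_distrib, Finset.sum_const, Finset.card_univ, Fintype.card_fin,
      Finset.sum_ite_eq' Finset.univ j]
    simp only [Finset.mem_univ, if_true, nsmul_eq_mul]
    ring
  rw [Finset.sum_congr rfl fun j _ => hrow j, Finset.sum_const, Finset.card_univ,
    Fintype.card_fin, nsmul_eq_mul]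
  ring

end
end

section
/- Let n ≥ 1 be an integer and f_n : ℂ∖{0} → ℂ be defined by f_n(z) = (z/conj(z))ⁿ. Then for every positive integer r and every z ∈ ℂ∖{0}, the iterated Laplacian satisfies (Δʳ f_n)(z) = (−4/|z|²)ʳ · (∏_{k=1}^r (n² − (k−1)²)) · f_n(z). -/
noncomputable section

open Complex Filter Topology

/-- The Euclidean Laplacian on `ℂ ≅ ℝ²`:
`Δf(z) = ∂²f/∂x²(z) + ∂²f/∂y²(z)`, where the second partials are computed as second
derivatives along the coordinate directions. -/
def lapC (f : ℂ → ℂ) (z : ℂ) : ℂ :=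
  deriv (deriv (fun t : ℝ => f (z + (t : ℂ)))) 0
    + deriv (deriv (fun t : ℝ => f (z + (t : ℂ) * Complex.I))) 0

/-- The iterated Laplacian: `Δ⁰f = f`, `Δʳf = Δ(Δ^{r−1}f)`. -/
def lapIter : ℕ → (ℂ → ℂ) → (ℂ → ℂ)
  | 0, f => f
  | r + 1, f => lapC (lapIter r f)


-- derivative of t ↦ (w + t*c)^a along the real line
lemma hd (a : ℤ) (w c : ℂ) (t : ℝ) (h : w + t*c ≠ 0) :
    HasDerivAt (fun s : ℝ => (w + (s:ℂ)*c)^a) ((a:ℂ) * (w+t*c)^(a-1) * c) t := by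
  have h1 : HasDerivAt (fun u : ℂ => (w + u*c)^a) ((a:ℂ) * (w+(t:ℂ)*c)^(a-1) * c) (t:ℂ) := by
    have hz := hasDerivAt_zpow a (w + (t:ℂ)*c) (Or.inl h)
    have h2 : HasDerivAt (fun u : ℂ => w + u*c) c (t:ℂ) :=
      by simpa using ((hasDerivAt_id ((t:ℝ):ℂ)).mul_const c).const_add w
    exact hz.comp (t:ℂ) h2
  exact h1.comp_ofReal

lemma prodD (a b : ℤ) (w₁ w₂ c₁ c₂ : ℂ) (t : ℝ) (h₁ : w₁ + t*c₁ ≠ 0) (h₂ : w₂ + t*c₂ ≠ 0) :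
    HasDerivAt (fun s : ℝ => (w₁ + (s:ℂ)*c₁)^a * (w₂ + (s:ℂ)*c₂)^b)
      ((a:ℂ)*(w₁+t*c₁)^(a-1)*c₁*(w₂+t*c₂)^b + (w₁+t*c₁)^a*((b:ℂ)*(w₂+t*c₂)^(b-1)*c₂)) t :=
  (hd a w₁ c₁ t h₁).mul (hd b w₂ c₂ t h₂)

lemma second (a b : ℤ) (w₁ w₂ c₁ c₂ : ℂ) (h₁ : w₁ ≠ 0) (h₂ : w₂ ≠ 0) :
    deriv (deriv (fun t : ℝ => (w₁ + (t:ℂ)*c₁)^a * (w₂ + (t:ℂ)*c₂)^b)) 0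
      = (a:ℂ)*((a:ℂ)-1)*w₁^(a-2)*w₂^b*c₁^2 + 2*(a:ℂ)*(b:ℂ)*w₁^(a-1)*w₂^(b-1)*c₁*c₂
        + (b:ℂ)*((b:ℂ)-1)*w₁^a*w₂^(b-2)*c₂^2 := by
  have cont1 : Continuous fun t : ℝ => w₁ + (t:ℂ)*c₁ := by continuity
  have cont2 : Continuous fun t : ℝ => w₂ + (t:ℂ)*c₂ := by continuity
  have e1 : ∀ᶠ t : ℝ in 𝓝 0, w₁ + (t:ℂ)*c₁ ≠ 0 := by
    have := (cont1.tendsto 0).eventually_ne (by simpa using h₁)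
    simpa using this
  have e2 : ∀ᶠ t : ℝ in 𝓝 0, w₂ + (t:ℂ)*c₂ ≠ 0 := by
    have := (cont2.tendsto 0).eventually_ne (by simpa using h₂)
    simpa using this
  set D : ℝ → ℂ := fun t =>
    ((a:ℂ)*c₁) * ((w₁+(t:ℂ)*c₁)^(a-1)*(w₂+(t:ℂ)*c₂)^b)
      + ((b:ℂ)*c₂) * ((w₁+(t:ℂ)*c₁)^a*(w₂+(t:ℂ)*c₂)^(b-1)) with hDdef
  have hev : deriv (fun t : ℝ => (w₁ + (t:ℂ)*c₁)^a * (w₂ + (t:ℂ)*c₂)^b) =ᶠ[𝓝 (0:ℝ)] D := by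
    filter_upwards [e1, e2] with t ht1 ht2
    rw [(prodD a b w₁ w₂ c₁ c₂ t ht1 ht2).deriv, hDdef]
    ring
  rw [Filter.EventuallyEq.deriv_eq hev]
  have h₁' : w₁ + ((0:ℝ):ℂ)*c₁ ≠ 0 := by simpa using h₁
  have h₂' : w₂ + ((0:ℝ):ℂ)*c₂ ≠ 0 := by simpa using h₂
  have hA := (prodD (a-1) b w₁ w₂ c₁ c₂ 0 h₁' h₂').const_mul ((a:ℂ)*c₁)
  have hB := (prodD a (b-1) w₁ w₂ c₁ c₂ 0 h₁' h₂').const_mul ((b:ℂ)*c₂)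
  have hD := hA.add hB
  rw [(show HasDerivAt D _ 0 from hD).deriv]
  have ea : a - 1 - 1 = a - 2 := by ring
  have eb : b - 1 - 1 = b - 2 := by ring
  simp only [Complex.ofReal_zero, zero_mul, add_zero, ea, eb]
  push_cast
  ring

lemma lapC_congr {f g : ℂ → ℂ} {z : ℂ} (h : f =ᶠ[𝓝 z] g) : lapC f z = lapC g z := by
  unfold lapC
  have t1 : Tendsto (fun t : ℝ => z + (t:ℂ)) (𝓝 0) (𝓝 z) := by
    have c : Continuous fun t : ℝ => z + (t:ℂ) := by continuity
    simpa using c.tendsto 0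
  have t2 : Tendsto (fun t : ℝ => z + (t:ℂ)*Complex.I) (𝓝 0) (𝓝 z) := by
    have c : Continuous fun t : ℝ => z + (t:ℂ)*Complex.I := by continuity
    simpa using c.tendsto 0
  have h1 : (fun t : ℝ => f (z + (t:ℂ))) =ᶠ[𝓝 (0:ℝ)] (fun t : ℝ => g (z + (t:ℂ))) :=
    h.comp_tendsto t1
  have h2 : (fun t : ℝ => f (z + (t:ℂ)*Complex.I)) =ᶠ[𝓝 (0:ℝ)] (fun t : ℝ => g (z + (t:ℂ)*Complex.I)) :=
    h.comp_tendsto t2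
  rw [h1.deriv.deriv_eq, h2.deriv.deriv_eq]

lemma lapC_const_mul (c : ℂ) (f : ℂ → ℂ) (z : ℂ) :
    lapC (fun w => c * f w) z = c * lapC f z := by
  unfold lapC
  have k : ∀ u : ℝ → ℂ, deriv (deriv (fun t => c * u t)) 0 = c * deriv (deriv u) 0 := by
    intro u
    have h1 : deriv (fun t => c * u t) = fun t => c * deriv u t := by
      funext t; exact deriv_const_mul_field c
    rw [h1]
    exact deriv_const_mul_field c
  rw [show (fun t : ℝ => c * f (z + (t:ℂ))) = fun t : ℝ => c * (fun s : ℝ => f (z + (s:ℂ))) t from rfl,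
    k, k]
  ring

lemma lapC_zpow (a b : ℤ) (z : ℂ) (hz : z ≠ 0) :
    lapC (fun w => w^a * (starRingEnd ℂ w)^b) z
      = 4*(a:ℂ)*(b:ℂ)*(z^(a-1)*(starRingEnd ℂ z)^(b-1)) := by
  have hzc : starRingEnd ℂ z ≠ 0 := by
    simpa using hz
  unfold lapC
  have E1 : (fun t : ℝ => (fun w => w^a * (starRingEnd ℂ w)^b) (z + (t:ℂ)))
      = fun t : ℝ => (z + (t:ℂ)*1)^a * (starRingEnd ℂ z + (t:ℂ)*1)^b := by
    funext t; simp [map_add, Complex.conj_ofReal]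
  have E2 : (fun t : ℝ => (fun w => w^a * (starRingEnd ℂ w)^b) (z + (t:ℂ)*Complex.I))
      = fun t : ℝ => (z + (t:ℂ)*Complex.I)^a * (starRingEnd ℂ z + (t:ℂ)*(-Complex.I))^b := by
    funext t
    simp only [map_add, map_mul, Complex.conj_ofReal, Complex.conj_I, mul_neg]
  rw [E1, E2, second a b z (starRingEnd ℂ z) 1 1 hz hzc,
      second a b z (starRingEnd ℂ z) Complex.I (-Complex.I) hz hzc]
  simp only [Complex.I_sq, one_pow, mul_one, neg_neg, mul_neg, neg_mul]
  have hII : Complex.I * -Complex.I = 1 := by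
    simp [mul_neg, Complex.I_mul_I]
  have hnI : (-Complex.I)^2 = -1 := by
    simpa using Complex.I_sq
  rw [hnI]
  ring_nf
  rw [Complex.I_sq]
  ring

lemma lapIter_key (n : ℕ) (r : ℕ) :
    ∀ z : ℂ, z ≠ 0 →
      lapIter r (fun w => w^(n:ℤ) * (starRingEnd ℂ w)^(-(n:ℤ))) z
        = ((-4)^r * ∏ k ∈ Finset.range r, ((n:ℂ)^2 - (k:ℂ)^2))
            * (z^((n:ℤ) - r) * (starRingEnd ℂ z)^(-(n:ℤ) - r)) := by
  induction r with
  | zero => intro z hz; simp [lapIter]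
  | succ r ih =>
    intro z hz
    have hg : lapIter r (fun w => w^(n:ℤ) * (starRingEnd ℂ w)^(-(n:ℤ)))
        =ᶠ[𝓝 z] fun w => ((-4)^r * ∏ k ∈ Finset.range r, ((n:ℂ)^2 - (k:ℂ)^2))
            * (w^((n:ℤ) - r) * (starRingEnd ℂ w)^(-(n:ℤ) - r)) := by
      filter_upwards [compl_singleton_mem_nhds hz] with w hw
      exact ih w hw
    have step : lapIter (r+1) (fun w => w^(n:ℤ) * (starRingEnd ℂ w)^(-(n:ℤ))) z
        = lapC (lapIter r (fun w => w^(n:ℤ) * (starRingEnd ℂ w)^(-(n:ℤ)))) z := rfl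
    rw [step, lapC_congr hg, lapC_const_mul, lapC_zpow ((n:ℤ) - r) (-(n:ℤ) - r) z hz]
    rw [Finset.prod_range_succ]
    have ea : (n:ℤ) - r - 1 = (n:ℤ) - (r+1 : ℕ) := by push_cast; ring
    have eb : -(n:ℤ) - r - 1 = -(n:ℤ) - (r+1 : ℕ) := by push_cast; ring
    rw [ea, eb]
    push_cast
    ring

/-- for `f_n(z) = (z/conj z)ⁿ`, every positive integer `r` and every
`z ≠ 0`, `(Δʳ f_n)(z) = (−4/|z|²)ʳ · ∏_{k=1}^r (n² − (k−1)²) · f_n(z)`. -/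
theorem lapIter_z_div_conj_pow (n : ℕ) (hn : 1 ≤ n) (r : ℕ) (hr : 1 ≤ r)
    (z : ℂ) (hz : z ≠ 0) :
    lapIter r (fun w => (w / starRingEnd ℂ w) ^ n) z
      = (-4 / (((‖z‖ : ℝ) : ℂ)) ^ 2) ^ r
        * (∏ k ∈ Finset.Icc 1 r, ((n : ℂ) ^ 2 - ((k : ℂ) - 1) ^ 2))
        * (z / starRingEnd ℂ z) ^ n := by
  have hzc : starRingEnd ℂ z ≠ 0 := by simpa using hz
  have hfun : (fun w : ℂ => (w / starRingEnd ℂ w) ^ n)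
      = fun w : ℂ => w^(n:ℤ) * (starRingEnd ℂ w)^(-(n:ℤ)) := by
    funext w
    by_cases hw : w = 0
    · subst hw
      have hn0 : n ≠ 0 := by omega
      simp [zero_pow hn0, zero_zpow, hn0]
    · have hwc : starRingEnd ℂ w ≠ 0 := by simpa using hw
      rw [div_pow, zpow_neg, zpow_natCast, zpow_natCast, div_eq_mul_inv]
  rw [hfun, lapIter_key n r z hz]
  have hQ : (∏ k ∈ Finset.Icc 1 r, ((n:ℂ)^2 - ((k:ℂ)-1)^2))
      = ∏ k ∈ Finset.range r, ((n:ℂ)^2 - (k:ℂ)^2) := by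
    rw [← Finset.Ico_add_one_right_eq_Icc, Finset.prod_Ico_eq_prod_range]
    rw [Nat.add_sub_cancel]
    apply Finset.prod_congr rfl
    intro k _
    push_cast
    ring
  have hA : (((‖z‖ : ℝ) : ℂ))^2 = z * starRingEnd ℂ z := by
    rw [← Complex.ofReal_pow, Complex.sq_norm, Complex.mul_conj]
  rw [hQ, hA]
  rw [zpow_sub₀ hz, zpow_sub₀ hzc, zpow_neg, zpow_natCast, zpow_natCast, zpow_natCast,
    zpow_natCast, div_pow, div_pow, mul_pow]
  have h1 : z^r ≠ 0 := pow_ne_zero _ hz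
  have h2 : (starRingEnd ℂ z)^r ≠ 0 := pow_ne_zero _ hzc
  have h3 : z^n ≠ 0 := pow_ne_zero _ hz
  have h4 : (starRingEnd ℂ z)^n ≠ 0 := pow_ne_zero _ hzc
  rw [div_eq_mul_inv, div_eq_mul_inv, div_eq_mul_inv]
  ring

end
end

section
/- Let p, q ∈ ℂ⁴ be linearly independent with (q,q) = 0, where (u,v) = Σ_{i=1}^4 u_i v_i is the complex-bilinear dot product. Define f̂ on the open set V = {x ∈ ℝ⁴ : Σ_i q_i x_i ≠ 0} by f̂(x) = (Σ_i p_i x_i)/(Σ_i q_i x_i). Then for all x ∈ V: (i) Δf̂(x) = −2(p,q)/(Σ_i q_i x_i)², and (ii) the function x ↦ |x|² · Δf̂(x) is harmonic on V, i.e. Δ(x ↦ |x|² Δf̂(x)) = 0 on V. In particular, if (p,q) ≠ 0 then Δf̂ does not vanish on V while Δ(|x|²Δf̂) = 0. -/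
noncomputable section

/-- The Euclidean Laplacian on `ℝ⁴`, applied to complex-valued functions:
`Δf(x) = Σ_{i=1}^4 ∂²f/∂x_i²(x)`, where the second partials are computed as second
derivatives along the coordinate directions. -/
def lap4 (f : (Fin 4 → ℝ) → ℂ) (x : Fin 4 → ℝ) : ℂ :=
  ∑ i : Fin 4, deriv (deriv (fun t : ℝ => f (x + t • (Pi.single i 1 : Fin 4 → ℝ)))) 0

open Filter Topology

lemma lap4_eq (f : (Fin 4 → ℝ) → ℂ) (x : Fin 4 → ℝ) :
    lap4 f x
      = ∑ i : Fin 4, deriv (deriv (fun t : ℝ => f (x + t • (Pi.single i 1 : Fin 4 → ℝ)))) 0 :=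
  rfl

lemma hasDerivAt_coeC (t : ℝ) : HasDerivAt (fun t : ℝ => (t : ℂ)) 1 t := by
  simpa using (hasDerivAt_id t).ofReal_comp

lemma hasDerivAt_lin (u v : ℂ) (t : ℝ) :
    HasDerivAt (fun t : ℝ => u + (t:ℂ)*v) v t := by
  simpa using (((hasDerivAt_coeC t).mul_const v).const_add u)

lemma deriv2_linfrac (a b c d : ℂ) (hc : c ≠ 0) :
    deriv (deriv (fun t : ℝ => (a + (t:ℂ)*b)/(c + (t:ℂ)*d))) 0
      = -2*d*(b*c - a*d)/c^3 := by
  have hcont : Continuous fun t : ℝ => c + (t:ℂ)*d := by continuity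
  have hUo : IsOpen {t : ℝ | c + (t:ℂ)*d ≠ 0} :=
    isOpen_compl_singleton.preimage hcont
  have h0 : (0:ℝ) ∈ {t : ℝ | c + (t:ℂ)*d ≠ 0} := by simp [hc]
  have hmem : {t : ℝ | c + (t:ℂ)*d ≠ 0} ∈ 𝓝 (0:ℝ) := hUo.mem_nhds h0
  have hder : ∀ t : ℝ, c + (t:ℂ)*d ≠ 0 →
      HasDerivAt (fun t : ℝ => (a + (t:ℂ)*b)/(c + (t:ℂ)*d))
        ((b*c - a*d)/(c + (t:ℂ)*d)^2) t := by
    intro t ht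
    have := (hasDerivAt_lin a b t).fun_div (hasDerivAt_lin c d t) ht
    exact this.congr_deriv (by ring)
  have hEq : deriv (fun t : ℝ => (a + (t:ℂ)*b)/(c + (t:ℂ)*d))
      =ᶠ[𝓝 (0:ℝ)] fun t => (b*c - a*d)/(c + (t:ℂ)*d)^2 :=
    eventually_of_mem hmem fun t ht => (hder t ht).deriv
  rw [hEq.deriv_eq]
  have hpow : HasDerivAt (fun t : ℝ => (c + (t:ℂ)*d)^2)
      (2*(c + ((0:ℝ):ℂ)*d)^1*d) 0 := by
    have h := (hasDerivAt_lin c d 0).fun_mul (hasDerivAt_lin c d 0)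
    have h2 : (fun t:ℝ => (c+(t:ℂ)*d)*(c+(t:ℂ)*d)) = fun t:ℝ => (c+(t:ℂ)*d)^2 := by
      funext u; ring
    rw [h2] at h; exact h.congr_deriv (by ring)
  have h2 : ((c + ((0:ℝ):ℂ)*d)^2) ≠ 0 := by
    simpa using pow_ne_zero 2 hc
  have := (hasDerivAt_const (0:ℝ) (b*c - a*d)).fun_div hpow h2
  rw [this.deriv]
  push_cast
  simp only [zero_mul, add_zero]
  field_simp
  ring

lemma hasDerivAt_invpow2 (K c d : ℂ) (t : ℝ) (ht : c + (t:ℂ)*d ≠ 0) :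
    HasDerivAt (fun t : ℝ => K / (c + (t:ℂ)*d)^2)
      (-2*K*d/(c + (t:ℂ)*d)^3) t := by
  have hpow : HasDerivAt (fun t : ℝ => (c + (t:ℂ)*d)^2)
      (2*(c + (t:ℂ)*d)^1*d) t := by
    have h := (hasDerivAt_lin c d t).fun_mul (hasDerivAt_lin c d t)
    have h2 : (fun t:ℝ => (c+(t:ℂ)*d)*(c+(t:ℂ)*d)) = fun t:ℝ => (c+(t:ℂ)*d)^2 := by
      funext u; ring
    rw [h2] at h; exact h.congr_deriv (by ring)
  have := (hasDerivAt_const t K).fun_div hpow (pow_ne_zero 2 ht)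
  exact this.congr_deriv (by field_simp; ring)

lemma hasDerivAt_invpow3 (K c d : ℂ) (t : ℝ) (ht : c + (t:ℂ)*d ≠ 0) :
    HasDerivAt (fun t : ℝ => K / (c + (t:ℂ)*d)^3)
      (-3*K*d/(c + (t:ℂ)*d)^4) t := by
  have hpow : HasDerivAt (fun t : ℝ => (c + (t:ℂ)*d)^3)
      (3*(c + (t:ℂ)*d)^2*d) t := by
    have h := ((hasDerivAt_lin c d t).fun_mul (hasDerivAt_lin c d t)).fun_mul (hasDerivAt_lin c d t)
    have h2 : (fun t:ℝ => (c+(t:ℂ)*d)*(c+(t:ℂ)*d)*(c+(t:ℂ)*d)) = fun t:ℝ => (c+(t:ℂ)*d)^3 := by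
      funext u; ring
    rw [h2] at h; exact h.congr_deriv (by ring)
  have := (hasDerivAt_const t K).fun_div hpow (pow_ne_zero 3 ht)
  exact this.congr_deriv (by field_simp; ring)

lemma hasDerivAt_quad (s r : ℝ) (t : ℝ) :
    HasDerivAt (fun t : ℝ => ((s:ℂ) + 2*(t:ℂ)*(r:ℂ) + (t:ℂ)^2))
      (2*(r:ℂ) + 2*(t:ℂ)) t := by
  have h1 : HasDerivAt (fun t : ℝ => 2*(t:ℂ)*(r:ℂ)) (2*(r:ℂ)) t := by
    simpa [mul_comm, mul_assoc] using (((hasDerivAt_coeC t).const_mul (2:ℂ)).mul_const (r:ℂ))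
  have h2 : HasDerivAt (fun t : ℝ => (t:ℂ)^2) (2*(t:ℂ)) t := by
    have h := (hasDerivAt_coeC t).fun_mul (hasDerivAt_coeC t)
    have h2' : (fun t:ℝ => (t:ℂ)*(t:ℂ)) = fun t:ℝ => (t:ℂ)^2 := by funext u; ring
    rw [h2'] at h; exact h.congr_deriv (by ring)
  simpa using ((h1.const_add (s:ℂ)).fun_add h2)

lemma deriv2_quadfrac (s r : ℝ) (K c d : ℂ) (hc : c ≠ 0)
    (g : ℝ → ℂ)
    (hg : ∀ᶠ t in 𝓝 (0:ℝ),
      g t = ((s:ℂ) + 2*(t:ℂ)*(r:ℂ) + (t:ℂ)^2) * (K / (c + (t:ℂ)*d)^2)) :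
    deriv (deriv g) 0 = 2*K/c^2 - 8*(r:ℂ)*d*K/c^3 + 6*(s:ℂ)*d^2*K/c^4 := by
  set F : ℝ → ℂ := fun t => ((s:ℂ) + 2*(t:ℂ)*(r:ℂ) + (t:ℂ)^2) * (K / (c + (t:ℂ)*d)^2) with hF
  have hgF : g =ᶠ[𝓝 (0:ℝ)] F := hg
  have step1 : deriv (deriv g) 0 = deriv (deriv F) 0 := (hgF.deriv).deriv_eq
  rw [step1]
  have hcont : Continuous fun t : ℝ => c + (t:ℂ)*d := by continuity
  have hUo : IsOpen {t : ℝ | c + (t:ℂ)*d ≠ 0} :=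
    isOpen_compl_singleton.preimage hcont
  have h0 : (0:ℝ) ∈ {t : ℝ | c + (t:ℂ)*d ≠ 0} := by simp [hc]
  have hmem : {t : ℝ | c + (t:ℂ)*d ≠ 0} ∈ 𝓝 (0:ℝ) := hUo.mem_nhds h0
  set F1 : ℝ → ℂ := fun t =>
    (2*(r:ℂ) + 2*(t:ℂ)) * (K / (c + (t:ℂ)*d)^2)
      + ((s:ℂ) + 2*(t:ℂ)*(r:ℂ) + (t:ℂ)^2) * (-2*K*d/(c + (t:ℂ)*d)^3) with hF1
  have hder : ∀ t : ℝ, c + (t:ℂ)*d ≠ 0 → HasDerivAt F (F1 t) t := by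
    intro t ht
    exact (hasDerivAt_quad s r t).mul (hasDerivAt_invpow2 K c d t ht)
  have hEq : deriv F =ᶠ[𝓝 (0:ℝ)] F1 :=
    eventually_of_mem hmem fun t ht => (hder t ht).deriv
  rw [hEq.deriv_eq]
  have h0' : c + ((0:ℝ):ℂ)*d ≠ 0 := by simpa using hc
  have hA : HasDerivAt (fun t : ℝ => (2*(r:ℂ) + 2*(t:ℂ)) * (K / (c + (t:ℂ)*d)^2))
      (2 * (K / (c + ((0:ℝ):ℂ)*d)^2)
        + (2*(r:ℂ) + 2*((0:ℝ):ℂ)) * (-2*K*d/(c + ((0:ℝ):ℂ)*d)^3)) 0 := by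
    have hlin2 : HasDerivAt (fun t : ℝ => 2*(r:ℂ) + 2*(t:ℂ)) 2 (0:ℝ) := by
      simpa [mul_comm] using (hasDerivAt_lin (2*(r:ℂ)) 2 0)
    exact hlin2.mul (hasDerivAt_invpow2 K c d 0 h0')
  have hB : HasDerivAt
      (fun t : ℝ => ((s:ℂ) + 2*(t:ℂ)*(r:ℂ) + (t:ℂ)^2) * (-2*K*d/(c + (t:ℂ)*d)^3))
      ((2*(r:ℂ) + 2*((0:ℝ):ℂ)) * (-2*K*d/(c + ((0:ℝ):ℂ)*d)^3)
        + ((s:ℂ) + 2*((0:ℝ):ℂ)*(r:ℂ) + ((0:ℝ):ℂ)^2) * (-3*(-2*K*d)*d/(c + ((0:ℝ):ℂ)*d)^4)) 0 :=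
    (hasDerivAt_quad s r 0).mul (hasDerivAt_invpow3 (-2*K*d) c d 0 h0')
  have hAB := (hA.fun_add hB).deriv
  rw [show F1 = (fun t : ℝ => (2*(r:ℂ) + 2*(t:ℂ)) * (K / (c + (t:ℂ)*d)^2)
      + ((s:ℂ) + 2*(t:ℂ)*(r:ℂ) + (t:ℂ)^2) * (-2*K*d/(c + (t:ℂ)*d)^3)) from rfl, hAB]
  push_cast
  simp only [zero_mul, add_zero]
  field_simp
  ring

lemma sum_line (v : Fin 4 → ℂ) (x : Fin 4 → ℝ) (i : Fin 4) (t : ℝ) :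
    ∑ j, v j * ((((x + t • (Pi.single i 1 : Fin 4 → ℝ)) j : ℝ)) : ℂ)
      = (∑ j, v j * ((x j : ℝ) : ℂ)) + (t:ℂ) * v i := by
  fin_cases i <;>
    (simp [Fin.sum_univ_four, Pi.single_apply]; push_cast; ring)

lemma sq_line (x : Fin 4 → ℝ) (i : Fin 4) (t : ℝ) :
    ∑ j, ((x + t • (Pi.single i 1 : Fin 4 → ℝ)) j)^2
      = (∑ j, (x j)^2) + 2*t*(x i) + t^2 := by
  fin_cases i <;>
    (simp [Fin.sum_univ_four, Pi.single_apply]; ring)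

lemma part1 (p q : Fin 4 → ℂ) (hq : (∑ i, q i * q i) = 0) (x : Fin 4 → ℝ)
    (hx : (∑ i, q i * (x i : ℂ)) ≠ 0) :
    lap4 (fun y => (∑ i, p i * (y i : ℂ)) / (∑ i, q i * (y i : ℂ))) x
      = -2 * (∑ i, p i * q i) / (∑ i, q i * (x i : ℂ)) ^ 2 := by
  set L := ∑ i, p i * ((x i : ℝ) : ℂ) with hL
  set M := ∑ i, q i * ((x i : ℝ) : ℂ) with hM
  rw [lap4_eq]
  have step : ∀ i : Fin 4,
      deriv (deriv (fun t : ℝ =>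
        (∑ j, p j * (((x + t • (Pi.single i 1 : Fin 4 → ℝ)) j : ℝ) : ℂ))
          / (∑ j, q j * (((x + t • (Pi.single i 1 : Fin 4 → ℝ)) j : ℝ) : ℂ)))) 0
        = -2*(q i)*((p i)*M - L*(q i))/M^3 := by
    intro i
    have hfun : (fun t : ℝ =>
        (∑ j, p j * (((x + t • (Pi.single i 1 : Fin 4 → ℝ)) j : ℝ) : ℂ))
          / (∑ j, q j * (((x + t • (Pi.single i 1 : Fin 4 → ℝ)) j : ℝ) : ℂ)))
        = fun t : ℝ => (L + (t:ℂ)*(p i))/(M + (t:ℂ)*(q i)) := by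
      funext t; rw [sum_line, sum_line]
    rw [hfun]
    exact deriv2_linfrac L (p i) M (q i) hx
  simp only [step]
  have hnum : ∑ i : Fin 4, -2*(q i)*((p i)*M - L*(q i))
      = -2*M*(∑ i, p i * q i) + 2*L*(∑ i, q i * q i) := by
    simp only [Fin.sum_univ_four]
    ring
  rw [← Finset.sum_div, hnum, hq]
  field_simp
  ring

/-- let `p, q ∈ ℂ⁴` be linearly independent with `(q,q) = 0`, and let
`f̂(x) = (Σ p_i x_i)/(Σ q_i x_i)` on `V = {x : Σ q_i x_i ≠ 0}`. Then on `V`: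
(i) `Δf̂ = −2(p,q)/(Σ q_i x_i)²`, (ii) `Δ(|x|²·Δf̂) = 0`, and in particular if
`(p,q) ≠ 0` then `Δf̂` does not vanish on `V`. -/
theorem biharmonic_R4 (p q : Fin 4 → ℂ) (hpq : LinearIndependent ℂ ![p, q])
    (hq : (∑ i, q i * q i) = 0) :
    ∀ x : Fin 4 → ℝ, (∑ i, q i * (x i : ℂ)) ≠ 0 →
      (lap4 (fun y => (∑ i, p i * (y i : ℂ)) / (∑ i, q i * (y i : ℂ))) x
          = -2 * (∑ i, p i * q i) / (∑ i, q i * (x i : ℂ)) ^ 2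
        ∧ lap4 (fun y => ((∑ i, (y i) ^ 2 : ℝ) : ℂ)
            * lap4 (fun w => (∑ i, p i * (w i : ℂ)) / (∑ i, q i * (w i : ℂ))) y) x = 0
        ∧ ((∑ i, p i * q i) ≠ 0 →
            lap4 (fun y => (∑ i, p i * (y i : ℂ)) / (∑ i, q i * (y i : ℂ))) x ≠ 0)) := by
  intro x hx
  refine ⟨part1 p q hq x hx, ?_, ?_⟩
  · -- part (ii)
    set M := ∑ i, q i * ((x i : ℝ) : ℂ) with hM
    set K : ℂ := -2 * (∑ i, p i * q i) with hK
    set s : ℝ := ∑ j, (x j)^2 with hs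
    rw [lap4_eq]
    have step : ∀ i : Fin 4,
        deriv (deriv (fun t : ℝ =>
          ((∑ j, ((x + t • (Pi.single i 1 : Fin 4 → ℝ)) j) ^ 2 : ℝ) : ℂ)
            * lap4 (fun w => (∑ j, p j * ((w j : ℝ) : ℂ)) / (∑ j, q j * ((w j : ℝ) : ℂ)))
                (x + t • (Pi.single i 1 : Fin 4 → ℝ)))) 0
          = 2*K/M^2 - 8*((x i : ℝ):ℂ)*(q i)*K/M^3 + 6*(s:ℂ)*(q i)^2*K/M^4 := by
      intro i
      apply deriv2_quadfrac s (x i) K M (q i) hx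
      have hcont : Continuous fun t : ℝ => M + (t:ℂ)*(q i) := by continuity
      have hUo : IsOpen {t : ℝ | M + (t:ℂ)*(q i) ≠ 0} :=
        isOpen_compl_singleton.preimage hcont
      have h0 : (0:ℝ) ∈ {t : ℝ | M + (t:ℂ)*(q i) ≠ 0} := by simp [hx]
      filter_upwards [hUo.mem_nhds h0] with t ht
      have hden : (∑ j, q j * (((x + t • (Pi.single i 1 : Fin 4 → ℝ)) j : ℝ) : ℂ)) ≠ 0 := by
        rw [sum_line]; exact ht
      rw [part1 p q hq _ hden, sum_line q x i t, sq_line x i t]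
      push_cast [hs]
      rw [← hM]
    simp only [step]
    have hsum : ∑ i : Fin 4,
        (2*K/M^2 - 8*((x i : ℝ):ℂ)*(q i)*K/M^3 + 6*(s:ℂ)*(q i)^2*K/M^4)
        = 4*(2*K/M^2) - (8*K/M^3)*(∑ i, q i * ((x i : ℝ):ℂ))
          + (6*(s:ℂ)*K/M^4)*(∑ i, q i * q i) := by
      simp only [Fin.sum_univ_four]
      ring
    rw [hsum, hq, ← hM]
    field_simp
    ring
  · intro hP h
    rw [part1 p q hq x hx] at h
    exact (div_ne_zero (mul_ne_zero (by norm_num) hP) (pow_ne_zero 2 hx)) h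

end
end

section
/- Let p, q ∈ ℂ⁴ be linearly independent with (q,q)_L = 0, where (u,v)_L = −u₀v₀ + u₁v₁ + u₂v₂ + u₃v₃ is the complex-bilinear Lorentzian pairing. Define f̂ on the open set V = {x ∈ ℝ⁴ : q₀x₀ + q₁x₁ + q₂x₂ + q₃x₃ ≠ 0} by f̂(x) = (p₀x₀ + p₁x₁ + p₂x₂ + p₃x₃)/(q₀x₀ + q₁x₁ + q₂x₂ + q₃x₃). Then for all x ∈ V: (i) □f̂(x) = −2(p,q)_L/(q₀x₀ + … + q₃x₃)², and (ii) □(x ↦ (−x₀² + x₁² + x₂² + x₃²) · □f̂(x)) = 0 on V. In particular, if (p,q)_L ≠ 0 then □f̂ does not vanish on V. -/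
noncomputable section

/-- The Lorentzian signs `ε₀ = −1`, `ε₁ = ε₂ = ε₃ = 1`. -/
def lsign (i : Fin 4) : ℂ := if i = 0 then -1 else 1

/-- The d'Alembert wave operator on `ℝ⁴` (coordinates `x₀, x₁, x₂, x₃`), applied to
complex-valued functions: `□f = −∂²f/∂x₀² + ∂²f/∂x₁² + ∂²f/∂x₂² + ∂²f/∂x₃²`, where the
second partials are computed as second derivatives along the coordinate directions. -/
def boxOp (f : (Fin 4 → ℝ) → ℂ) (x : Fin 4 → ℝ) : ℂ :=
  ∑ i : Fin 4, lsign i * deriv (deriv (fun t : ℝ => f (x + t • (Pi.single i 1 : Fin 4 → ℝ)))) 0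


open Filter in
private lemma key_rat2 (a₀ a₁ a₂ k C D : ℂ) (hC : C ≠ 0) :
    deriv (deriv (fun t : ℝ => (a₀ + a₁ * t + a₂ * t ^ 2) * k / (C + D * t) ^ 2)) 0
      = 2 * a₂ * k / C ^ 2 - 4 * a₁ * k * D / C ^ 3 + 6 * a₀ * k * D ^ 2 / C ^ 4 := by
  set F₁ : ℂ → ℂ := fun z =>
    ((a₁ + 2 * a₂ * z) * (C + D * z) - (a₀ + a₁ * z + a₂ * z ^ 2) * (2 * D)) * k / (C + D * z) ^ 3
    with hF₁def
  have hlin : ∀ z : ℂ, HasDerivAt (fun w : ℂ => C + D * w) D z := by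
    intro z
    simpa using ((hasDerivAt_id z).const_mul D).const_add C
  have hF₁ : ∀ z : ℂ, C + D * z ≠ 0 →
      HasDerivAt (fun w : ℂ => (a₀ + a₁ * w + a₂ * w ^ 2) * k / (C + D * w) ^ 2) (F₁ z) z := by
    intro z hz
    have h1 : HasDerivAt (fun w : ℂ => (a₀ + a₁ * w + a₂ * w ^ 2) * k)
        ((a₁ + 2 * a₂ * z) * k) z := by
      have := ((((hasDerivAt_id z).const_mul a₁).const_add a₀).add
        ((hasDerivAt_pow 2 z).const_mul a₂)).mul_const k
      refine this.congr_deriv ?_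
      push_cast
      ring
    have h2 : HasDerivAt (fun w : ℂ => (C + D * w) ^ 2) (2 * (C + D * z) * D) z := by
      have := (hlin z).pow 2
      refine this.congr_deriv ?_
      all_goals (push_cast; ring)
    have := h1.div h2 (pow_ne_zero 2 hz)
    refine this.congr_deriv ?_
    rw [hF₁def]
    field_simp
  have hF₂ : HasDerivAt F₁
      (2 * a₂ * k / C ^ 2 - 4 * a₁ * k * D / C ^ 3 + 6 * a₀ * k * D ^ 2 / C ^ 4) 0 := by
    have hC0 : C + D * (0:ℂ) ≠ 0 := by simpa using hC
    have h1 : HasDerivAt (fun z : ℂ =>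
        ((a₁ + 2 * a₂ * z) * (C + D * z) - (a₀ + a₁ * z + a₂ * z ^ 2) * (2 * D)) * k)
        ((2 * a₂ * C - a₁ * D) * k) 0 := by
      have ha : HasDerivAt (fun z : ℂ => a₁ + 2 * a₂ * z) (2 * a₂) 0 := by
        simpa using ((hasDerivAt_id (0:ℂ)).const_mul (2 * a₂)).const_add a₁
      have hb : HasDerivAt (fun z : ℂ => a₀ + a₁ * z + a₂ * z ^ 2)
          (a₁ + 2 * a₂ * 0) 0 := by
        have := (((hasDerivAt_id (0:ℂ)).const_mul a₁).const_add a₀).add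
          ((hasDerivAt_pow 2 (0:ℂ)).const_mul a₂)
        refine this.congr_deriv ?_
        push_cast
        ring
      have := ((ha.mul (hlin 0)).sub (hb.mul_const (2 * D))).mul_const k
      refine this.congr_deriv ?_
      all_goals ring
    have h2 : HasDerivAt (fun z : ℂ => (C + D * z) ^ 3) (3 * (C + D * 0) ^ 2 * D) 0 := by
      have := (hlin 0).pow 3
      refine this.congr_deriv ?_
      all_goals (push_cast; ring)
    have := h1.div h2 (pow_ne_zero 3 hC0)
    refine this.congr_deriv ?_
    field_simp
    ring
  have hev : ∀ᶠ t : ℝ in nhds 0, C + D * (t : ℂ) ≠ 0 := by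
    have hc : ContinuousAt (fun t : ℝ => C + D * (t : ℂ)) 0 := by fun_prop
    have : (fun t : ℝ => C + D * (t : ℂ)) 0 ≠ 0 := by simpa using hC
    exact hc.eventually_ne this
  have hd : deriv (fun s : ℝ => (a₀ + a₁ * s + a₂ * s ^ 2) * k / (C + D * s) ^ 2)
      =ᶠ[nhds (0:ℝ)] fun t : ℝ => F₁ t := by
    filter_upwards [hev] with t ht
    exact ((hF₁ t ht).comp_ofReal).deriv
  rw [hd.deriv_eq]
  exact (hF₂.comp_ofReal).deriv

private lemma line_sum (c : Fin 4 → ℂ) (x : Fin 4 → ℝ) (i : Fin 4) (t : ℝ) :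
    (∑ j, c j * (((x + t • (Pi.single i 1 : Fin 4 → ℝ)) j : ℝ) : ℂ))
      = (∑ j, c j * (x j : ℂ)) + c i * t := by
  have h : ∀ j, c j * (((x + t • (Pi.single i 1 : Fin 4 → ℝ)) j : ℝ) : ℂ)
      = c j * (x j : ℂ) + (if j = i then c i * t else 0) := by
    intro j
    simp only [Pi.add_apply, Pi.smul_apply, Pi.single_apply, smul_eq_mul]
    split <;> rename_i hji
    · subst hji; push_cast; ring
    · push_cast; ring
  rw [Finset.sum_congr rfl fun j _ => h j, Finset.sum_add_distrib, Finset.sum_ite_eq']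
  simp

private lemma line_sum_sq (x : Fin 4 → ℝ) (i : Fin 4) (t : ℝ) :
    (∑ j, lsign j * (((x + t • (Pi.single i 1 : Fin 4 → ℝ)) j : ℝ) : ℂ) ^ 2)
      = (∑ j, lsign j * (x j : ℂ) ^ 2) + 2 * lsign i * (x i : ℂ) * t + lsign i * t ^ 2 := by
  have h : ∀ j, lsign j * (((x + t • (Pi.single i 1 : Fin 4 → ℝ)) j : ℝ) : ℂ) ^ 2
      = lsign j * (x j : ℂ) ^ 2
        + (if j = i then 2 * lsign i * (x i : ℂ) * t + lsign i * (t:ℂ) ^ 2 else 0) := by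
    intro j
    simp only [Pi.add_apply, Pi.smul_apply, Pi.single_apply, smul_eq_mul]
    split <;> rename_i hji
    · subst hji; push_cast; ring
    · push_cast; ring
  rw [Finset.sum_congr rfl fun j _ => h j, Finset.sum_add_distrib, Finset.sum_ite_eq']
  simp [add_assoc]

open Filter in
private lemma key_rat1 (A B C D : ℂ) (hC : C ≠ 0) :
    deriv (deriv (fun t : ℝ => (A + B * t) / (C + D * t))) 0
      = -2 * D * (B * C - A * D) / C ^ 3 := by
  have hev : ∀ᶠ t : ℝ in nhds 0, C + D * (t : ℂ) ≠ 0 := by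
    have hc : ContinuousAt (fun t : ℝ => C + D * (t : ℂ)) 0 := by fun_prop
    exact hc.eventually_ne (by simpa using hC)
  have heq : (fun t : ℝ => (A + B * t) / (C + D * t))
      =ᶠ[nhds (0:ℝ)] fun t : ℝ =>
        (A * C + (A * D + B * C) * t + B * D * t ^ 2) * 1 / (C + D * t) ^ 2 := by
    filter_upwards [hev] with t ht
    rw [div_eq_div_iff ht (pow_ne_zero 2 ht)]
    ring
  rw [heq.deriv.deriv_eq, key_rat2 _ _ _ _ _ _ hC]
  field_simp
  ring

private lemma boxOp_frac (p q : Fin 4 → ℂ) (hq : (∑ i, lsign i * q i * q i) = 0)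
    (x : Fin 4 → ℝ) (hx : (∑ i, q i * (x i : ℂ)) ≠ 0) :
    boxOp (fun y => (∑ i, p i * (y i : ℂ)) / (∑ i, q i * (y i : ℂ))) x
      = -2 * (∑ i, lsign i * p i * q i) / (∑ i, q i * (x i : ℂ)) ^ 2 := by
  set P := ∑ i, p i * (x i : ℂ) with hP
  set Q := ∑ i, q i * (x i : ℂ) with hQ
  unfold boxOp
  have hterm : ∀ i : Fin 4,
      deriv (deriv (fun t : ℝ =>
        (∑ j, p j * (((x + t • (Pi.single i 1 : Fin 4 → ℝ)) j : ℝ) : ℂ))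
          / (∑ j, q j * (((x + t • (Pi.single i 1 : Fin 4 → ℝ)) j : ℝ) : ℂ)))) 0
      = -2 * q i * (p i * Q - P * q i) / Q ^ 3 := by
    intro i
    have hfun : (fun t : ℝ =>
        (∑ j, p j * (((x + t • (Pi.single i 1 : Fin 4 → ℝ)) j : ℝ) : ℂ))
          / (∑ j, q j * (((x + t • (Pi.single i 1 : Fin 4 → ℝ)) j : ℝ) : ℂ)))
        = fun t : ℝ => (P + p i * t) / (Q + q i * t) := by
      funext t; rw [line_sum, line_sum]
    rw [hfun, key_rat1 P (p i) Q (q i) hx]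
  calc (∑ i : Fin 4, lsign i * deriv (deriv (fun t : ℝ =>
        (∑ j, p j * (((x + t • (Pi.single i 1 : Fin 4 → ℝ)) j : ℝ) : ℂ))
          / (∑ j, q j * (((x + t • (Pi.single i 1 : Fin 4 → ℝ)) j : ℝ) : ℂ)))) 0)
      = ∑ i : Fin 4, (lsign i * p i * q i * (-2 / Q ^ 2)
          + lsign i * q i * q i * (2 * P / Q ^ 3)) := by
        refine Finset.sum_congr rfl fun i _ => ?_
        rw [hterm i]
        field_simp
        ring
    _ = -2 * (∑ i, lsign i * p i * q i) / Q ^ 2 := by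
        rw [Finset.sum_add_distrib, ← Finset.sum_mul, ← Finset.sum_mul, hq]
        ring

/-- let `p, q ∈ ℂ⁴` be linearly independent with `(q,q)_L = 0` for the
Lorentzian pairing `(u,v)_L = −u₀v₀ + u₁v₁ + u₂v₂ + u₃v₃`, and let
`f̂(x) = (Σ p_i x_i)/(Σ q_i x_i)` on `V = {x : Σ q_i x_i ≠ 0}`. Then on `V`:
(i) `□f̂ = −2(p,q)_L/(Σ q_i x_i)²`, (ii) `□((−x₀²+x₁²+x₂²+x₃²)·□f̂) = 0`, and in
particular if `(p,q)_L ≠ 0` then `□f̂` does not vanish on `V`. -/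
theorem biharmonic_Minkowski (p q : Fin 4 → ℂ) (hpq : LinearIndependent ℂ ![p, q])
    (hq : (∑ i, lsign i * q i * q i) = 0) :
    ∀ x : Fin 4 → ℝ, (∑ i, q i * (x i : ℂ)) ≠ 0 →
      (boxOp (fun y => (∑ i, p i * (y i : ℂ)) / (∑ i, q i * (y i : ℂ))) x
          = -2 * (∑ i, lsign i * p i * q i) / (∑ i, q i * (x i : ℂ)) ^ 2
        ∧ boxOp (fun y => (∑ i, lsign i * ((y i : ℂ)) ^ 2)
            * boxOp (fun w => (∑ i, p i * (w i : ℂ)) / (∑ i, q i * (w i : ℂ))) y) x = 0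
        ∧ ((∑ i, lsign i * p i * q i) ≠ 0 →
            boxOp (fun y => (∑ i, p i * (y i : ℂ)) / (∑ i, q i * (y i : ℂ))) x ≠ 0)) := by
  intro x hx
  set c := ∑ i, lsign i * p i * q i with hc
  set Q := ∑ i, q i * (x i : ℂ) with hQ
  set S := ∑ i, lsign i * (x i : ℂ) ^ 2 with hS
  refine ⟨boxOp_frac p q hq x hx, ?_, ?_⟩
  · -- part (ii)
    unfold boxOp
    have hterm : ∀ i : Fin 4,
        deriv (deriv (fun t : ℝ =>
          (∑ j, lsign j * (((x + t • (Pi.single i 1 : Fin 4 → ℝ)) j : ℝ) : ℂ) ^ 2)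
            * boxOp (fun w => (∑ j, p j * (w j : ℂ)) / (∑ j, q j * (w j : ℂ)))
              (x + t • (Pi.single i 1 : Fin 4 → ℝ)))) 0
        = 2 * lsign i * (-2 * c) / Q ^ 2
            - 4 * (2 * lsign i * (x i : ℂ)) * (-2 * c) * q i / Q ^ 3
            + 6 * S * (-2 * c) * (q i) ^ 2 / Q ^ 4 := by
      intro i
      have hev : ∀ᶠ t : ℝ in nhds 0, Q + q i * (t : ℂ) ≠ 0 := by
        have hcont : ContinuousAt (fun t : ℝ => Q + q i * (t : ℂ)) 0 := by fun_prop
        exact hcont.eventually_ne (by simpa using hx)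
      have heq : (fun t : ℝ =>
          (∑ j, lsign j * (((x + t • (Pi.single i 1 : Fin 4 → ℝ)) j : ℝ) : ℂ) ^ 2)
            * boxOp (fun w => (∑ j, p j * (w j : ℂ)) / (∑ j, q j * (w j : ℂ)))
              (x + t • (Pi.single i 1 : Fin 4 → ℝ)))
          =ᶠ[nhds (0:ℝ)] fun t : ℝ =>
            (S + (2 * lsign i * (x i : ℂ)) * t + lsign i * t ^ 2) * (-2 * c)
              / (Q + q i * t) ^ 2 := by
        filter_upwards [hev] with t ht
        have hQy : (∑ j, q j * (((x + t • (Pi.single i 1 : Fin 4 → ℝ)) j : ℝ) : ℂ)) ≠ 0 := by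
          rw [line_sum]; exact ht
        rw [line_sum_sq, boxOp_frac p q hq _ hQy, line_sum]
        rw [← hc, ← hQ]
        ring
      rw [heq.deriv.deriv_eq,
        key_rat2 S (2 * lsign i * (x i : ℂ)) (lsign i) (-2 * c) Q (q i) hx]
    calc (∑ i : Fin 4, lsign i * deriv (deriv (fun t : ℝ =>
          (∑ j, lsign j * (((x + t • (Pi.single i 1 : Fin 4 → ℝ)) j : ℝ) : ℂ) ^ 2)
            * boxOp (fun w => (∑ j, p j * (w j : ℂ)) / (∑ j, q j * (w j : ℂ)))
              (x + t • (Pi.single i 1 : Fin 4 → ℝ)))) 0)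
        = ∑ i : Fin 4, ((2 * (-2 * c) / Q ^ 2)
            + q i * (x i : ℂ) * (8 * (2 * c) / Q ^ 3)
            + lsign i * q i * q i * (6 * (-2 * c) * S / Q ^ 4)) := by
          refine Finset.sum_congr rfl fun i _ => ?_
          rw [hterm i]
          have h1 : lsign i = 1 ∨ lsign i = -1 := by
            unfold lsign; split
            · right; rfl
            · left; rfl
          rcases h1 with h1 | h1 <;> rw [h1] <;> field_simp <;> ring
      _ = 0 := by
          rw [Finset.sum_add_distrib, Finset.sum_add_distrib, ← Finset.sum_mul,
            ← Finset.sum_mul, hq, Finset.sum_const, ← hQ]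
          simp only [Finset.card_univ, Fintype.card_fin, nsmul_eq_mul]
          field_simp
          ring
  · -- part (iii)
    intro hcne
    rw [boxOp_frac p q hq x hx, ← hc, ← hQ]
    exact div_ne_zero (by simpa using hcne) (pow_ne_zero 2 hx)


end
end

section
/- Let n ≥ 1 and 1 ≤ j, α ≤ n, and let z_{jα} : ℂ^{n×n} → ℂ be the matrix coefficient function z ↦ z_{jα}. Then on U(n) one has τ(z_{jα}) = −n · z_{jα}, i.e. for every p ∈ U(n), Σ_{Z ∈ B} (d²/ds²)|_{s=0} (p · exp(sZ))_{jα} = −n · p_{jα}. -/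
open Matrix

noncomputable section

attribute [local instance] Matrix.linftyOpNormedRing Matrix.linftyOpNormedAlgebra

open NormedSpace in
/-- Auxiliary continuous linear map `M ↦ (p * (M * Q)) j α` over `ℝ`. -/
def mulEntryCLM {n : ℕ} (p Q : Matrix (Fin n) (Fin n) ℂ) (j α : Fin n) :
    Matrix (Fin n) (Fin n) ℂ →L[ℝ] ℂ :=
  LinearMap.toContinuousLinearMap
    { toFun := fun M => (p * (M * Q)) j α
      map_add' := by intros; simp [Matrix.add_mul, Matrix.mul_add]
      map_smul' := by intros; simp [Matrix.smul_mul, Matrix.mul_smul] }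

open NormedSpace in
lemma hasDerivAt_entry {n : ℕ} (p Q Z : Matrix (Fin n) (Fin n) ℂ) (j α : Fin n) (s : ℝ) :
    HasDerivAt (fun u : ℝ => (p * (exp (u • Z) * Q)) j α)
      ((p * ((exp (s • Z) * Z) * Q)) j α) s :=
  (mulEntryCLM p Q j α).hasFDerivAt.comp_hasDerivAt s (hasDerivAt_exp_smul_const Z s)

open NormedSpace in
lemma lieD2_entry {n : ℕ} (j α : Fin n) (p Z : Matrix (Fin n) (Fin n) ℂ) :
    lieD2 (fun z => z j α) p Z = (p * (Z * Z)) j α := by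
  have hE : ∀ s : ℝ, NormedSpace.exp ((s : ℂ) • Z) = exp (s • Z) := by
    intro s
    rw [show ((s : ℂ)) • Z = (s : ℝ) • Z from algebraMap_smul ℂ s Z]
  unfold lieD2
  have h0 : (fun s : ℝ => (fun z : Matrix (Fin n) (Fin n) ℂ => z j α)
      (p * NormedSpace.exp ((s : ℂ) • Z)))
      = fun s : ℝ => (p * (exp (s • Z) * (1 : Matrix (Fin n) (Fin n) ℂ))) j α := by
    funext s; rw [hE, Matrix.mul_one]
  rw [h0]
  have h1 : deriv (fun s : ℝ => (p * (exp (s • Z) * (1 : Matrix (Fin n) (Fin n) ℂ))) j α)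
      = fun s : ℝ => (p * (exp (s • Z) * Z)) j α := by
    funext s
    have := (hasDerivAt_entry p 1 Z j α s).deriv
    rw [this, Matrix.mul_one]
  rw [h1]
  have h2 := (hasDerivAt_entry p Z Z j α 0).deriv
  rw [h2]
  simp [Matrix.mul_assoc]

lemma sum_pair {n : ℕ} {M : Type*} [AddCommGroup M] (f : Fin n → M) :
    ∑ r : Fin n, ∑ s : Fin n, (if r < s then f r + f s else 0)
      = ∑ r : Fin n, (n - 1) • f r := by
  have h1 : ∑ r : Fin n, ∑ s : Fin n, (if r < s then f r + f s else 0)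
      = (∑ r : Fin n, ∑ s : Fin n, (if r < s then f r else 0))
        + ∑ r : Fin n, ∑ s : Fin n, (if r < s then f s else 0) := by
    rw [← Finset.sum_add_distrib]
    refine Finset.sum_congr rfl fun r _ => ?_
    rw [← Finset.sum_add_distrib]
    refine Finset.sum_congr rfl fun s _ => ?_
    split_ifs <;> simp
  have h2 : ∑ r : Fin n, ∑ s : Fin n, (if r < s then f s else 0)
      = ∑ r : Fin n, ∑ s : Fin n, (if s < r then f r else 0) := Finset.sum_comm
  rw [h1, h2, ← Finset.sum_add_distrib]
  refine Finset.sum_congr rfl fun r _ => ?_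
  rw [← Finset.sum_add_distrib]
  have h3 : ∀ s : Fin n, ((if r < s then f r else 0) + (if s < r then f r else 0))
      = if s ≠ r then f r else 0 := by
    intro s
    rcases lt_trichotomy r s with h|h|h
    · simp [h, h.ne', h.asymm]
    · simp [h]
    · simp [h, h.ne, h.asymm]
  rw [Finset.sum_congr rfl fun s _ => h3 s, Finset.sum_ite, Finset.sum_const,
    Finset.sum_const_zero, add_zero, Finset.filter_ne', Finset.card_erase_of_mem
    (Finset.mem_univ r), Finset.card_univ, Fintype.card_fin]

lemma YXsq (n : ℕ) (r s : Fin n) (h : r ≠ s) :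
    matY n r s * matY n r s + (Complex.I • matX n r s) * (Complex.I • matX n r s)
      = -(matE n r r) + -(matE n s s) := by
  have h2 : ((Real.sqrt 2 : ℂ))⁻¹ * ((Real.sqrt 2 : ℂ))⁻¹ = (2 : ℂ)⁻¹ := by
    rw [← mul_inv, ← Complex.ofReal_mul, Real.mul_self_sqrt (by norm_num)]
    norm_num
  have hA : (matE n r s - matE n s r) * (matE n r s - matE n s r)
      = -(matE n r r) - matE n s s := by
    unfold matE
    rw [sub_mul, mul_sub, mul_sub,
      Matrix.single_mul_single_of_ne (h := h.symm), Matrix.single_mul_single_of_ne (h := h),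
      Matrix.single_mul_single_same, Matrix.single_mul_single_same, one_mul]
    abel
  have hB : (matE n r s + matE n s r) * (matE n r s + matE n s r)
      = matE n r r + matE n s s := by
    unfold matE
    rw [add_mul, mul_add, mul_add,
      Matrix.single_mul_single_of_ne (h := h.symm), Matrix.single_mul_single_of_ne (h := h),
      Matrix.single_mul_single_same, Matrix.single_mul_single_same, one_mul]
    abel
  unfold matY matX
  rw [smul_mul_smul_comm, smul_mul_smul_comm, smul_mul_smul_comm, hA, hB, h2,
    Complex.I_mul_I]
  rw [smul_smul, neg_one_mul]
  module

lemma diag_sq (n : ℕ) (t : Fin n) :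
    (Complex.I • matE n t t) * (Complex.I • matE n t t) = -(matE n t t) := by
  rw [smul_mul_smul_comm, Complex.I_mul_I]
  unfold matE
  rw [Matrix.single_mul_single_same, one_mul, neg_smul, one_smul]

lemma basis_sum (n : ℕ) :
    ((∑ r : Fin n, ∑ s : Fin n, if r < s then
        matY n r s * matY n r s + (Complex.I • matX n r s) * (Complex.I • matX n r s) else 0)
      + ∑ t : Fin n, (Complex.I • matE n t t) * (Complex.I • matE n t t))
      = (-(n : ℂ)) • (1 : Matrix (Fin n) (Fin n) ℂ) := by
  have h1 : ∀ r s : Fin n, (if r < s then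
      matY n r s * matY n r s + (Complex.I • matX n r s) * (Complex.I • matX n r s) else 0)
      = (if r < s then (fun t => -(matE n t t)) r + (fun t => -(matE n t t)) s else 0) := by
    intro r s
    split_ifs with h
    · exact YXsq n r s h.ne
    · rfl
  simp only [h1, diag_sq]
  rw [sum_pair (fun t => -(matE n t t)), ← Finset.sum_add_distrib]
  have h4 : ∀ t : Fin n, (n - 1) • (-(matE n t t)) + -(matE n t t) = (-(n : ℂ)) • matE n t t := by
    intro t
    rw [← succ_nsmul, Nat.sub_add_cancel t.pos, ← Nat.cast_smul_eq_nsmul ℂ, smul_neg, ← neg_smul]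
  simp only [h4]
  rw [← Finset.smul_sum]
  congr 1
  ext k l
  simp [matE, Matrix.single, Matrix.one_apply, ite_and, Matrix.sum_apply]

/-- The additive map `M ↦ (p * M) j α`. -/
def entryHom {n : ℕ} (p : Matrix (Fin n) (Fin n) ℂ) (j α : Fin n) :
    Matrix (Fin n) (Fin n) ℂ →+ ℂ :=
  AddMonoidHom.mk' (fun M => (p * M) j α) (fun A B => by simp [Matrix.mul_add])

/-- on `U(n)` one has `τ(z_{jα}) = −n·z_{jα}`. -/
theorem tau_coeff_unitary (n : ℕ) (hn : 1 ≤ n) (j α : Fin n)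
    (p : Matrix (Fin n) (Fin n) ℂ) (hp : p ∈ Matrix.unitaryGroup (Fin n) ℂ) :
    tauU n (fun z => z j α) p = -(n : ℂ) * p j α := by
  simp only [tauU, lieD2_entry]
  have key : entryHom p j α
      ((∑ r : Fin n, ∑ s : Fin n, if r < s then
          matY n r s * matY n r s + (Complex.I • matX n r s) * (Complex.I • matX n r s) else 0)
        + ∑ t : Fin n, (Complex.I • matE n t t) * (Complex.I • matE n t t))
      = -(n : ℂ) * p j α := by
    rw [basis_sum]
    show (p * ((-(n : ℂ)) • (1 : Matrix (Fin n) (Fin n) ℂ))) j α = _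
    simp [Matrix.mul_smul]
  rw [← key, map_add, map_sum, map_sum]
  congr 1
  · refine Finset.sum_congr rfl fun r _ => ?_
    rw [map_sum]
    refine Finset.sum_congr rfl fun s _ => ?_
    rw [apply_ite (entryHom p j α), map_add, map_zero]
    rfl

end
end

section
/- Let n ≥ 1 and 1 ≤ j, k, α, β ≤ n, and let z_{jα}, z_{kβ} : ℂ^{n×n} → ℂ be the corresponding matrix coefficient functions. Then on U(n) the conformality operator satisfies κ(z_{jα}, z_{kβ}) = −z_{kα} z_{jβ}, i.e. for every p ∈ U(n), Σ_{Z ∈ B} ((d/ds)|_{s=0} (p·exp(sZ))_{jα}) · ((d/ds)|_{s=0} (p·exp(sZ))_{kβ}) = −p_{kα} p_{jβ}. -/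
open Matrix

noncomputable section

attribute [local instance] Matrix.linftyOpNormedRing Matrix.linftyOpNormedAlgebra

lemma ite_split (P Q R : Prop) [Decidable P] [Decidable Q] [Decidable R] (x y : ℂ) :
    (if R then -((if P then x else 0) + (if Q then y else 0)) else 0)
      = (if P ∧ R then -x else 0) + (if Q ∧ R then -y else 0) := by
  split_ifs <;> first | tauto | ring

lemma lieD1_coeff {n : ℕ} (j α : Fin n) (p Z : Matrix (Fin n) (Fin n) ℂ) :
    lieD1 (fun z => z j α) p Z = (p * Z) j α := by
  have h1 : HasDerivAt (fun u : ℂ => NormedSpace.exp (u • Z)) Z 0 := by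
    have := hasDerivAt_exp_smul_const (𝕂 := ℂ) Z 0
    simp at this
    exact this
  have h2 : HasDerivAt (fun s : ℝ => NormedSpace.exp ((s : ℂ) • Z)) Z 0 := by
    have h1' : HasDerivAt (fun u : ℂ => NormedSpace.exp (u • Z)) Z ((0:ℝ):ℂ) := by
      simpa using h1
    have := HasDerivAt.scomp (0:ℝ) h1' Complex.ofRealCLM.hasDerivAt
    simp at this
    exact this
  let L : Matrix (Fin n) (Fin n) ℂ →ₗ[ℂ] ℂ :=
    { toFun := fun M => (p * M) j α
      map_add' := by intro a b; simp [Matrix.mul_add]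
      map_smul' := by intro c a; simp [Matrix.mul_smul] }
  have h3 : HasDerivAt (fun s : ℝ => (p * NormedSpace.exp ((s : ℂ) • Z)) j α)
      ((p * Z) j α) 0 := by
    have := ((LinearMap.toContinuousLinearMap L).restrictScalars ℝ).hasFDerivAt.comp_hasDerivAt
      (0:ℝ) h2
    simp [L, Function.comp_def] at this
    exact this
  exact h3.deriv


set_option maxHeartbeats 1600000 in
/-- on `U(n)` the conformality operator satisfies
`κ(z_{jα}, z_{kβ}) = −z_{kα} z_{jβ}`. -/
theorem kappa_coeff_unitary (n : ℕ) (hn : 1 ≤ n) (j k α β : Fin n)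
    (p : Matrix (Fin n) (Fin n) ℂ) (hp : p ∈ Matrix.unitaryGroup (Fin n) ℂ) :
    kappaU n (fun z => z j α) (fun z => z k β) p = -(p k α * p j β) := by
  classical
  have hc : ((Real.sqrt 2 : ℂ))⁻¹ * ((Real.sqrt 2 : ℂ))⁻¹ = 1/2 := by
    rw [← mul_inv, ← Complex.ofReal_mul, Real.mul_self_sqrt (by norm_num)]
    norm_num
  have eE : ∀ (r s a b : Fin n), (p * matE n r s) a b = if b = s then p a r else 0 := by
    intro r s a b
    simp [matE, Matrix.mul_apply, Matrix.single, ite_and, eq_comm]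
  have eY : ∀ (r s a b : Fin n), (p * matY n r s) a b
      = ((Real.sqrt 2 : ℂ))⁻¹ * ((if b = s then p a r else 0) - (if b = r then p a s else 0)) := by
    intro r s a b
    simp [matY, Matrix.mul_smul, Matrix.mul_sub, Matrix.smul_apply, Matrix.sub_apply, eE]
  have eX : ∀ (r s a b : Fin n), (p * (Complex.I • matX n r s)) a b
      = Complex.I * (((Real.sqrt 2 : ℂ))⁻¹
          * ((if b = s then p a r else 0) + (if b = r then p a s else 0))) := by
    intro r s a b
    simp [matX, Matrix.mul_smul, Matrix.mul_add, Matrix.smul_apply, Matrix.add_apply, eE,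
      mul_assoc]
    split_ifs <;> ring
  have eD : ∀ (t a b : Fin n), (p * (Complex.I • matE n t t)) a b
      = Complex.I * (if b = t then p a t else 0) := by
    intro t a b
    simp [Matrix.mul_smul, Matrix.smul_apply, eE]
  have expand : ∀ (A B C D c : ℂ),
      (c*(A-B))*(c*(C-D)) + (Complex.I*(c*(A+B)))*(Complex.I*(c*(C+D)))
        = (c*c) * (-2*(A*D+B*C)) := by
    intro A B C D c
    linear_combination ((c*(A+B))*(c*(C+D))) * Complex.I_sq
  -- the per-(r,s) term
  have hterm : ∀ r s : Fin n,
      (p * matY n r s) j α * (p * matY n r s) k β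
        + (p * (Complex.I • matX n r s)) j α * (p * (Complex.I • matX n r s)) k β
      = -((if α = s ∧ β = r then p j r * p k s else 0)
          + (if α = r ∧ β = s then p j s * p k r else 0)) := by
    intro r s
    rw [eY, eY, eX, eX, expand, hc]
    split_ifs <;> first | tauto | ring
  -- rewrite all lieD1's
  unfold kappaU
  simp only [lieD1_coeff]
  rw [Finset.sum_congr rfl (fun r _ => Finset.sum_congr rfl (fun s _ => by rw [hterm r s]))]
  have split1 : ∀ r s : Fin n,
      (if r < s then
          -((if α = s ∧ β = r then p j r * p k s else 0)
            + (if α = r ∧ β = s then p j s * p k r else 0)) else 0)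
      = (if (α = s ∧ β = r) ∧ r < s then -(p j r * p k s) else 0)
        + (if (α = r ∧ β = s) ∧ r < s then -(p j s * p k r) else 0) :=
    fun r s => ite_split _ _ _ _ _
  rw [Finset.sum_congr rfl (fun r _ => Finset.sum_congr rfl (fun s _ => split1 r s))]
  simp only [Finset.sum_add_distrib]
  have S1 : ∑ r : Fin n, ∑ s : Fin n,
      (if (α = s ∧ β = r) ∧ r < s then -(p j r * p k s) else 0)
      = if β < α then -(p j β * p k α) else 0 := by
    have inner : ∀ r : Fin n, (∑ s : Fin n,
        if (α = s ∧ β = r) ∧ r < s then -(p j r * p k s) else 0)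
        = if β = r ∧ r < α then -(p j r * p k α) else 0 := by
      intro r
      rw [Finset.sum_eq_single α]
      · simp
      · intro b _ hb
        exact if_neg (by rintro ⟨⟨h1, -⟩, -⟩; exact hb h1.symm)
      · simp
    rw [Finset.sum_congr rfl (fun r _ => inner r)]
    rw [Finset.sum_eq_single β]
    · simp
    · intro b _ hb
      exact if_neg (by rintro ⟨h1, -⟩; exact hb h1.symm)
    · simp
  have S2 : ∑ r : Fin n, ∑ s : Fin n,
      (if (α = r ∧ β = s) ∧ r < s then -(p j s * p k r) else 0)
      = if α < β then -(p j β * p k α) else 0 := by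
    have inner : ∀ r : Fin n, (∑ s : Fin n,
        if (α = r ∧ β = s) ∧ r < s then -(p j s * p k r) else 0)
        = if α = r ∧ r < β then -(p j β * p k r) else 0 := by
      intro r
      rw [Finset.sum_eq_single β]
      · simp
      · intro b _ hb
        exact if_neg (by rintro ⟨⟨-, h1⟩, -⟩; exact hb h1.symm)
      · simp
    rw [Finset.sum_congr rfl (fun r _ => inner r)]
    rw [Finset.sum_eq_single α]
    · simp
    · intro b _ hb
      exact if_neg (by rintro ⟨h1, -⟩; exact hb h1.symm)
    · simp
  have hI : ∀ x y : ℂ, (Complex.I * x) * (Complex.I * y) = -(x*y) := by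
    intro x y; linear_combination x*y*Complex.I_sq
  have SD : ∑ t : Fin n,
      (p * (Complex.I • matE n t t)) j α * (p * (Complex.I • matE n t t)) k β
      = if β = α then -(p j α * p k α) else 0 := by
    have inner : ∀ t : Fin n,
        (p * (Complex.I • matE n t t)) j α * (p * (Complex.I • matE n t t)) k β
        = if α = t ∧ β = t then -(p j t * p k t) else 0 := by
      intro t
      rw [eD, eD, hI]
      split_ifs <;> first | tauto | ring
    rw [Finset.sum_congr rfl (fun t _ => inner t)]
    rw [Finset.sum_eq_single α]
    · simp
    · intro b _ hb
      exact if_neg (by rintro ⟨h1, -⟩; exact hb h1.symm)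
    · simp
  rw [S1, S2, SD]
  rcases lt_trichotomy α β with h | h | h
  · simp [h, asymm h, h.ne, h.ne', not_lt_of_gt h]
    ring
  · simp [h]
    ring
  · simp [h, asymm h, h.ne, h.ne', not_lt_of_gt h]
    ring
end
end
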